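/- arXiv:2308.14662 — 5 statements merged into one kernel-verified Lean document; each statement's English description precedes it below -/
import Mathlib

section
/- Suppose (Ω¹(B), d_B) is a FODC on B such that Ω¹(B) is a σ-twisted B-bimodule, (Ω¹(H), d_H) is a bicovariant FODC on H, and the map d_{#σ}(b⊗h) = d_B b⊗h + b⊗d_H h satisfies the Leibniz rule on B#_σH with respect to the direct sum bimodule structure. Then necessarily d_B(σ(h⊗h')) = 0 for all h, h' ∈ H. -/
open TensorProduct

noncomputable section

/-- A finite representation `x ↦ ∑ fᵢ ⊗ gᵢ` of the value of a map into a tensor product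
(used to express Sweedler's notation faithfully). -/
def Rep2 (k : Type) [Field k] {M P Q : Type} [AddCommGroup M] [Module k M]
    [AddCommGroup P] [Module k P] [AddCommGroup Q] [Module k Q]
    (ρ : M →ₗ[k] P ⊗[k] Q) {ι : Type} (s : Finset ι) (f : ι → P) (g : ι → Q)
    (x : M) : Prop :=
  ∑ i ∈ s, f i ⊗ₜ[k] g i = ρ x

/-- A finite representation of the value of a map into a triple tensor product. -/
def Rep3 (k : Type) [Field k] {M P Q R : Type} [AddCommGroup M] [Module k M]
    [AddCommGroup P] [Module k P] [AddCommGroup Q] [Module k Q] [AddCommGroup R] [Module k R]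
    (ρ : M →ₗ[k] P ⊗[k] (Q ⊗[k] R)) {ι : Type} (s : Finset ι)
    (f : ι → P) (g : ι → Q) (e : ι → R) (x : M) : Prop :=
  ∑ i ∈ s, f i ⊗ₜ[k] (g i ⊗ₜ[k] e i) = ρ x

variable (k B H : Type) [Field k] [Ring B] [Algebra k B] [Ring H]
  [HopfAlgebra k H]

/-- The iterated comultiplication `h ↦ h₁ ⊗ (h₂ ⊗ h₃)`. -/
def Δ₂ : H →ₗ[k] H ⊗[k] (H ⊗[k] H) :=
  (TensorProduct.map LinearMap.id (Coalgebra.comul (R := k))) ∘ₗ Coalgebra.comul (R := k)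
structure TwistedSystem : Type 1 where
  act : H →ₗ[k] B →ₗ[k] B
  coc : H →ₗ[k] H →ₗ[k] B
  cocInv : H →ₗ[k] H →ₗ[k] B
  act_one : ∀ b : B, act 1 b = b
  act_unit : ∀ h : H, act h 1 = Coalgebra.counit (R := k) h • (1 : B)
  act_mul : ∀ (ι : Type) (s : Finset ι) (f g : ι → H) (h : H),
    Rep2 k (Coalgebra.comul (R := k)) s f g h → ∀ x y : B,
      act h (x * y) = ∑ i ∈ s, act (f i) x * act (g i) y
  conv_left : ∀ (ι ι' : Type) (s : Finset ι) (s' : Finset ι')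
      (f g : ι → H) (f' g' : ι' → H) (h h' : H),
    Rep2 k (Coalgebra.comul (R := k)) s f g h →
    Rep2 k (Coalgebra.comul (R := k)) s' f' g' h' →
      ∑ i ∈ s, ∑ j ∈ s', coc (f i) (f' j) * cocInv (g i) (g' j)
        = Coalgebra.counit (R := k) (h * h') • (1 : B)
  conv_right : ∀ (ι ι' : Type) (s : Finset ι) (s' : Finset ι')
      (f g : ι → H) (f' g' : ι' → H) (h h' : H),
    Rep2 k (Coalgebra.comul (R := k)) s f g h →
    Rep2 k (Coalgebra.comul (R := k)) s' f' g' h' →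
      ∑ i ∈ s, ∑ j ∈ s', cocInv (f i) (f' j) * coc (g i) (g' j)
        = Coalgebra.counit (R := k) (h * h') • (1 : B)
  twisted : ∀ (ι ι' : Type) (s : Finset ι) (s' : Finset ι')
      (f₁ : ι → H) (f₂ : ι → H) (f₃ : ι → H) (g₁ g₂ g₃ : ι' → H) (h h' : H),
    Rep3 k (Δ₂ k H) s f₁ f₂ f₃ h → Rep3 k (Δ₂ k H) s' g₁ g₂ g₃ h' → ∀ b : B,
      act h (act h' b) = ∑ i ∈ s, ∑ j ∈ s',
        coc (f₁ i) (g₁ j) * act (f₂ i * g₂ j) b * cocInv (f₃ i) (g₃ j)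
  coc_one_right : ∀ h : H, coc h 1 = Coalgebra.counit (R := k) h • (1 : B)
  coc_one_left : ∀ h : H, coc 1 h = Coalgebra.counit (R := k) h • (1 : B)
  cocycle : ∀ (ι ι' ι'' : Type) (s : Finset ι) (s' : Finset ι') (s'' : Finset ι'')
      (f₁ f₂ : ι → H) (g₁ g₂ : ι' → H) (e₁ e₂ : ι'' → H) (h h' h'' : H),
    Rep2 k (Coalgebra.comul (R := k)) s f₁ f₂ h →
    Rep2 k (Coalgebra.comul (R := k)) s' g₁ g₂ h' →
    Rep2 k (Coalgebra.comul (R := k)) s'' e₁ e₂ h'' →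
      ∑ i ∈ s, ∑ j ∈ s', ∑ l ∈ s'',
        act (f₁ i) (coc (g₁ j) (e₁ l)) * coc (f₂ i) (g₂ j * e₂ l)
      = ∑ i ∈ s, ∑ j ∈ s', coc (f₁ i) (g₁ j) * coc (f₂ i * g₂ j) h''

/-- The crossed product multiplication on `B ⊗ H`:
`(b ⊗ h)(b' ⊗ h') = b (h₁·b') σ(h₂ ⊗ h'₁) ⊗ h₃ h'₂`. -/
def IsCrossedMul (T : TwistedSystem k B H)
    (m : (B ⊗[k] H) →ₗ[k] (B ⊗[k] H) →ₗ[k] (B ⊗[k] H)) : Prop :=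
  ∀ (ι ι' : Type) (s : Finset ι) (s' : Finset ι')
    (f₁ f₂ f₃ : ι → H) (g₁ g₂ : ι' → H) (h h' : H),
    Rep3 k (Δ₂ k H) s f₁ f₂ f₃ h →
    Rep2 k (Coalgebra.comul (R := k)) s' g₁ g₂ h' → ∀ b b' : B,
      m (b ⊗ₜ[k] h) (b' ⊗ₜ[k] h') = ∑ i ∈ s, ∑ j ∈ s',
        (b * T.act (f₁ i) b' * T.coc (f₂ i) (g₁ j)) ⊗ₜ[k] (f₃ i * g₂ j)


/-- A bimodule over a `k`-algebra `A`, given by a pair of commuting bilinear actions. -/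
structure BimodData (A M : Type) [Ring A] [Algebra k A] [AddCommGroup M] [Module k M] where
  l : A →ₗ[k] M →ₗ[k] M
  r : M →ₗ[k] A →ₗ[k] M
  one_l : ∀ m : M, l 1 m = m
  r_one : ∀ m : M, r m 1 = m
  mul_l : ∀ (a b : A) (m : M), l (a * b) m = l a (l b m)
  r_mul : ∀ (m : M) (a b : A), r (r m a) b = r m (a * b)
  l_r : ∀ (a : A) (m : M) (b : A), r (l a m) b = l a (r m b)

/-- A first order differential calculus on `A` with bimodule of 1-forms `M`. -/
structure FODCData (A M : Type) [Ring A] [Algebra k A] [AddCommGroup M] [Module k M]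
    extends BimodData k A M where
  d : A →ₗ[k] M
  leibniz : ∀ a b : A, d (a * b) = r (d a) b + l a (d b)
  spanning : ∀ m : M, m ∈ Submodule.span k {z : M | ∃ a b : A, z = l a (d b)}

/-- An object of `ᴴ_H𝔐ᴴ_H`: an `H`-bimodule with compatible (bicovariant) left and right
`H`-comodule structures. -/
structure BicovBimod (N : Type) [AddCommGroup N] [Module k N]
    extends BimodData k H N where
  lco : N →ₗ[k] H ⊗[k] N
  rco : N →ₗ[k] N ⊗[k] H
  lco_counit : ∀ n : N, (TensorProduct.lid k N)
    ((TensorProduct.map (Coalgebra.counit (R := k)) LinearMap.id) (lco n)) = n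
  rco_counit : ∀ n : N, (TensorProduct.rid k N)
    ((TensorProduct.map LinearMap.id (Coalgebra.counit (R := k))) (rco n)) = n
  lco_coassoc : ∀ n : N, (TensorProduct.assoc k H H N)
      ((TensorProduct.map (Coalgebra.comul (R := k)) LinearMap.id) (lco n))
    = (TensorProduct.map LinearMap.id lco) (lco n)
  rco_coassoc : ∀ n : N, (TensorProduct.assoc k N H H)
      ((TensorProduct.map rco LinearMap.id) (rco n))
    = (TensorProduct.map LinearMap.id (Coalgebra.comul (R := k))) (rco n)
  bicomodule : ∀ n : N, (TensorProduct.map LinearMap.id rco) (lco n)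
    = (TensorProduct.assoc k H N H) ((TensorProduct.map lco LinearMap.id) (rco n))
  lco_lact : lco ∘ₗ TensorProduct.lift l
    = (TensorProduct.map (LinearMap.mul' k H) (TensorProduct.lift l)) ∘ₗ
      (TensorProduct.tensorTensorTensorComm k H H H N).toLinearMap ∘ₗ
      (TensorProduct.map (Coalgebra.comul (R := k)) lco)
  rco_lact : rco ∘ₗ TensorProduct.lift l
    = (TensorProduct.map (TensorProduct.lift l) (LinearMap.mul' k H)) ∘ₗ
      (TensorProduct.tensorTensorTensorComm k H H N H).toLinearMap ∘ₗ
      (TensorProduct.map (Coalgebra.comul (R := k)) rco)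
  lco_ract : lco ∘ₗ TensorProduct.lift r
    = (TensorProduct.map (LinearMap.mul' k H) (TensorProduct.lift r)) ∘ₗ
      (TensorProduct.tensorTensorTensorComm k H N H H).toLinearMap ∘ₗ
      (TensorProduct.map lco (Coalgebra.comul (R := k)))
  rco_ract : rco ∘ₗ TensorProduct.lift r
    = (TensorProduct.map (TensorProduct.lift r) (LinearMap.mul' k H)) ∘ₗ
      (TensorProduct.tensorTensorTensorComm k N H H H).toLinearMap ∘ₗ
      (TensorProduct.map rco (Coalgebra.comul (R := k)))

/-- A bicovariant first order differential calculus `(Ω¹(H), d_H)` on `H`. -/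
structure BicovFODC (N : Type) [AddCommGroup N] [Module k N]
    extends BicovBimod k H N where
  d : H →ₗ[k] N
  leibniz : ∀ a b : H, d (a * b) = r (d a) b + l a (d b)
  spanning : ∀ n : N, n ∈ Submodule.span k {z : N | ∃ a b : H, z = l a (d b)}
  d_lco : ∀ h : H, lco (d h) = (TensorProduct.map LinearMap.id d) (Coalgebra.comul (R := k) h)
  d_rco : ∀ h : H, rco (d h) = (TensorProduct.map d LinearMap.id) (Coalgebra.comul (R := k) h)

/-- The iterated left coaction `γ ↦ γ₋₂ ⊗ (γ₋₁ ⊗ γ₀)` of a bicovariant bimodule. -/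
def Λ₂ {N : Type} [AddCommGroup N] [Module k N] (W : BicovBimod k H N) :
    N →ₗ[k] H ⊗[k] (H ⊗[k] N) :=
  (TensorProduct.assoc k H H N).toLinearMap ∘ₗ
    (TensorProduct.map (Coalgebra.comul (R := k)) LinearMap.id) ∘ₗ W.lco

/-- The defining formula for the left `B #_σ H`-action on `(M ⊗ H) ⊕ (B ⊗ N)`:
`(b' ⊗ h')·(β ⊗ h + b ⊗ γ) = b'(h'₁·β)σ(h'₂ ⊗ h₁) ⊗ h'₃h₂ + b'(h'₁·b)σ(h'₂ ⊗ γ₋₁) ⊗ h'₃γ₀`. -/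
def IsCrossedLeftAct {M N : Type} [AddCommGroup M] [Module k M] [AddCommGroup N] [Module k N]
    (T : TwistedSystem k B H) (bim : BimodData k B M) (hact : H →ₗ[k] M →ₗ[k] M)
    (W : BicovBimod k H N)
    (L : (B ⊗[k] H) →ₗ[k] ((M ⊗[k] H) × (B ⊗[k] N)) →ₗ[k] ((M ⊗[k] H) × (B ⊗[k] N))) :
    Prop :=
  (∀ (b' : B) (h' : H) (β : M) (h : H) (ι ι' : Type) (s : Finset ι) (s' : Finset ι')
      (f₁ f₂ f₃ : ι → H) (g₁ g₂ : ι' → H),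
    Rep3 k (Δ₂ k H) s f₁ f₂ f₃ h' → Rep2 k (Coalgebra.comul (R := k)) s' g₁ g₂ h →
      L (b' ⊗ₜ[k] h') (β ⊗ₜ[k] h, 0)
        = (∑ i ∈ s, ∑ j ∈ s',
            bim.r (bim.l b' (hact (f₁ i) β)) (T.coc (f₂ i) (g₁ j)) ⊗ₜ[k] (f₃ i * g₂ j), 0))
  ∧ (∀ (b' : B) (h' : H) (b : B) (γ : N) (ι ι' : Type) (s : Finset ι) (s' : Finset ι')
      (f₁ f₂ f₃ : ι → H) (e₁ : ι' → H) (e₂ : ι' → N),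
    Rep3 k (Δ₂ k H) s f₁ f₂ f₃ h' → Rep2 k W.lco s' e₁ e₂ γ →
      L (b' ⊗ₜ[k] h') (0, b ⊗ₜ[k] γ)
        = (0, ∑ i ∈ s, ∑ j ∈ s',
            (b' * T.act (f₁ i) b * T.coc (f₂ i) (e₁ j)) ⊗ₜ[k] (W.l (f₃ i) (e₂ j))))

/-- The defining formula for the right `B #_σ H`-action on `(M ⊗ H) ⊕ (B ⊗ N)`:
`(β ⊗ h + b ⊗ γ)·(b' ⊗ h') = β(h₁·b')σ(h₂ ⊗ h'₁) ⊗ h₃h'₂ + b(γ₋₂·b')σ(γ₋₁ ⊗ h'₁) ⊗ γ₀h'₂`. -/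
def IsCrossedRightAct {M N : Type} [AddCommGroup M] [Module k M] [AddCommGroup N] [Module k N]
    (T : TwistedSystem k B H) (bim : BimodData k B M) (W : BicovBimod k H N)
    (Rt : ((M ⊗[k] H) × (B ⊗[k] N)) →ₗ[k] (B ⊗[k] H) →ₗ[k] ((M ⊗[k] H) × (B ⊗[k] N))) :
    Prop :=
  (∀ (β : M) (h : H) (b' : B) (h' : H) (ι ι' : Type) (s : Finset ι) (s' : Finset ι')
      (f₁ f₂ f₃ : ι → H) (g₁ g₂ : ι' → H),
    Rep3 k (Δ₂ k H) s f₁ f₂ f₃ h → Rep2 k (Coalgebra.comul (R := k)) s' g₁ g₂ h' →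
      Rt (β ⊗ₜ[k] h, 0) (b' ⊗ₜ[k] h')
        = (∑ i ∈ s, ∑ j ∈ s',
            bim.r (bim.r β (T.act (f₁ i) b')) (T.coc (f₂ i) (g₁ j)) ⊗ₜ[k] (f₃ i * g₂ j), 0))
  ∧ (∀ (b : B) (γ : N) (b' : B) (h' : H) (ι ι' : Type) (s : Finset ι) (s' : Finset ι')
      (e₁ e₂ : ι → H) (e₃ : ι → N) (g₁ g₂ : ι' → H),
    Rep3 k (Λ₂ k H W) s e₁ e₂ e₃ γ → Rep2 k (Coalgebra.comul (R := k)) s' g₁ g₂ h' →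
      Rt (0, b ⊗ₜ[k] γ) (b' ⊗ₜ[k] h')
        = (0, ∑ i ∈ s, ∑ j ∈ s',
            (b * T.act (e₁ i) b' * T.coc (e₂ i) (g₁ j)) ⊗ₜ[k] (W.r (e₃ i) (g₂ j))))

/-- The defining formula for the right `H`-coaction on `(M ⊗ H) ⊕ (B ⊗ N)`:
`β ⊗ h + b ⊗ γ ↦ β ⊗ h₁ ⊗ h₂ + b ⊗ γ₀ ⊗ γ₁`. -/
def IsCrossedCoact {M N : Type} [AddCommGroup M] [Module k M] [AddCommGroup N] [Module k N]
    (W : BicovBimod k H N)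
    (ρC : ((M ⊗[k] H) × (B ⊗[k] N)) →ₗ[k] ((M ⊗[k] H) × (B ⊗[k] N)) ⊗[k] H) : Prop :=
  (∀ (β : M) (h : H) (ι : Type) (s : Finset ι) (g₁ g₂ : ι → H),
    Rep2 k (Coalgebra.comul (R := k)) s g₁ g₂ h →
      ρC (β ⊗ₜ[k] h, 0)
        = ∑ i ∈ s, ((β ⊗ₜ[k] g₁ i, 0) : (M ⊗[k] H) × (B ⊗[k] N)) ⊗ₜ[k] g₂ i)
  ∧ (∀ (b : B) (γ : N) (ι : Type) (s : Finset ι) (n₀ : ι → N) (n₁ : ι → H),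
    Rep2 k W.rco s n₀ n₁ γ →
      ρC (0, b ⊗ₜ[k] γ)
        = ∑ i ∈ s, (((0 : M ⊗[k] H), b ⊗ₜ[k] n₀ i) : (M ⊗[k] H) × (B ⊗[k] N)) ⊗ₜ[k] n₁ i)

/-- Collapse `∑ εᵢ(gᵢ) • fᵢ = x` from a representation of `comul x`. -/
lemma collapse_right {ι : Type} (s : Finset ι) (f g : ι → H) (x : H)
    (hr : ∑ i ∈ s, f i ⊗ₜ[k] g i = Coalgebra.comul (R := k) x) :
    ∑ i ∈ s, Coalgebra.counit (R := k) (g i) • f i = x := by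
  have := congrArg (fun z => (TensorProduct.rid k H)
    (LinearMap.lTensor H (Coalgebra.counit (R := k)) z)) hr
  simpa [map_sum, Coalgebra.lTensor_counit_comul] using this

/-- Collapse `∑ εᵢ(fᵢ) • gᵢ = x` from a representation of `comul x`. -/
lemma collapse_left {ι : Type} (s : Finset ι) (f g : ι → H) (x : H)
    (hr : ∑ i ∈ s, f i ⊗ₜ[k] g i = Coalgebra.comul (R := k) x) :
    ∑ i ∈ s, Coalgebra.counit (R := k) (f i) • g i = x := by
  have := congrArg (fun z => (TensorProduct.lid k H)
    (LinearMap.rTensor H (Coalgebra.counit (R := k)) z)) hr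
  simpa [map_sum, Coalgebra.rTensor_counit_comul] using this

/-- If `Ω¹(B)` is a `σ`-twisted `B`-bimodule, `(Ω¹(H), d_H)` is a
bicovariant FODC on `H`, and `d_#σ(b ⊗ h) = d_B b ⊗ h + b ⊗ d_H h` satisfies the Leibniz
rule on `B #_σ H` with respect to the crossed-product bimodule structure on
`(Ω¹(B) ⊗ H) ⊕ (B ⊗ Ω¹(H))`, then necessarily `d_B(σ(h ⊗ h')) = 0` for all `h, h' ∈ H`. -/
theorem d_coc_eq_zero_of_leibniz
    (T : TwistedSystem k B H) (m : (B ⊗[k] H) →ₗ[k] (B ⊗[k] H) →ₗ[k] (B ⊗[k] H))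
    (hm : IsCrossedMul k B H T m)
    (M N : Type) [AddCommGroup M] [Module k M] [AddCommGroup N] [Module k N]
    (F : FODCData k B M) (hact : H →ₗ[k] M →ₗ[k] M)
    -- `Ω¹(B)` is a `σ`-twisted `B`-bimodule:
    (hact_one : ∀ x : M, hact 1 x = x)
    (hact_sandwich : ∀ (ι : Type) (s : Finset ι) (f₁ f₂ f₃ : ι → H) (h : H),
      Rep3 k (Δ₂ k H) s f₁ f₂ f₃ h → ∀ (b b' : B) (x : M),
        hact h (F.r (F.l b x) b')
          = ∑ i ∈ s, F.r (F.l (T.act (f₁ i) b) (hact (f₂ i) x)) (T.act (f₃ i) b'))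
    (hact_twisted : ∀ (ι ι' : Type) (s : Finset ι) (s' : Finset ι')
        (f₁ f₂ f₃ : ι → H) (g₁ g₂ g₃ : ι' → H) (h h' : H),
      Rep3 k (Δ₂ k H) s f₁ f₂ f₃ h → Rep3 k (Δ₂ k H) s' g₁ g₂ g₃ h' → ∀ x : M,
        hact h (hact h' x) = ∑ i ∈ s, ∑ j ∈ s',
          F.r (F.l (T.coc (f₁ i) (g₁ j)) (hact (f₂ i * g₂ j) x))
            (T.cocInv (f₃ i) (g₃ j)))
    -- `(Ω¹(H), d_H)` is a bicovariant FODC on `H`: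
    (W : BicovFODC k H N)
    -- the crossed-product bimodule actions on `(Ω¹(B) ⊗ H) ⊕ (B ⊗ Ω¹(H))`:
    (L : (B ⊗[k] H) →ₗ[k] ((M ⊗[k] H) × (B ⊗[k] N)) →ₗ[k] ((M ⊗[k] H) × (B ⊗[k] N)))
    (hL : IsCrossedLeftAct k B H T F.toBimodData hact W.toBicovBimod L)
    (Rt : ((M ⊗[k] H) × (B ⊗[k] N)) →ₗ[k] (B ⊗[k] H) →ₗ[k] ((M ⊗[k] H) × (B ⊗[k] N)))
    (hR : IsCrossedRightAct k B H T F.toBimodData W.toBicovBimod Rt)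
    -- `d_#σ` satisfies the Leibniz rule:
    (h_leibniz : ∀ x y : B ⊗[k] H,
      (LinearMap.prod (TensorProduct.map F.d LinearMap.id)
        (TensorProduct.map LinearMap.id W.d)) (m x y)
      = Rt ((LinearMap.prod (TensorProduct.map F.d LinearMap.id)
          (TensorProduct.map LinearMap.id W.d)) x) y
        + L x ((LinearMap.prod (TensorProduct.map F.d LinearMap.id)
          (TensorProduct.map LinearMap.id W.d)) y)) :
    ∀ h h' : H, F.d (T.coc h h') = 0 := by
  intro h h'
  classical
  -- `d_B 1 = 0`
  have hd1 : F.d (1 : B) = 0 := by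
    have h0 := F.leibniz 1 1
    rw [mul_one, F.r_one, F.one_l] at h0
    exact (right_eq_add.mp h0)
  -- finite representations of `comul h` and `comul h'`
  obtain ⟨s, hs⟩ := TensorProduct.exists_finset (R := k) (Coalgebra.comul (R := k) h)
  obtain ⟨s', hs'⟩ := TensorProduct.exists_finset (R := k) (Coalgebra.comul (R := k) h')
  -- representations of `comul p.2` and `comul p.1` for each pair `p`
  choose t ht using fun p : H × H =>
    TensorProduct.exists_finset (R := k) (Coalgebra.comul (R := k) p.2)
  choose u hu using fun p : H × H =>
    TensorProduct.exists_finset (R := k) (Coalgebra.comul (R := k) p.1)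
  -- a `Rep3` for `Δ₂ h`
  have hΔh : Rep3 k (Δ₂ k H) (s.sigma t) (fun x => x.1.1) (fun x => x.2.1)
      (fun x => x.2.2) h := by
    unfold Rep3 Δ₂
    rw [Finset.sum_sigma]
    simp only [LinearMap.comp_apply]
    rw [hs, map_sum]
    refine Finset.sum_congr rfl fun p _ => ?_
    rw [TensorProduct.map_tmul, LinearMap.id_apply, ht p, TensorProduct.tmul_sum]
  -- a `Rep2` for `comul h'`
  have hch' : Rep2 k (Coalgebra.comul (R := k)) s' (fun l => l.1) (fun l => l.2) h' :=
    hs'.symm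
  -- a `Rep2` for `lco (d_H h')`
  have hlcoh' : Rep2 k W.lco s' (fun l => l.1) (fun l => W.d l.2) (W.d h') := by
    unfold Rep2
    rw [W.d_lco, hs', map_sum]
    simp [TensorProduct.map_tmul]
  -- a `Rep3` for `Λ₂ (d_H h)`
  have hΛ : Rep3 k (Λ₂ k H W.toBicovBimod) (s.sigma u) (fun x => x.2.1) (fun x => x.2.2)
      (fun x => W.d x.1.2) (W.d h) := by
    unfold Rep3 Λ₂
    rw [Finset.sum_sigma]
    simp only [LinearMap.comp_apply]
    rw [W.d_lco, hs, map_sum, map_sum, map_sum]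
    refine Finset.sum_congr rfl fun p _ => ?_
    rw [TensorProduct.map_tmul, LinearMap.id_apply, TensorProduct.map_tmul,
      LinearMap.id_apply, hu p, TensorProduct.sum_tmul, map_sum]
    refine Finset.sum_congr rfl fun q _ => ?_
    rfl
  -- evaluate the multiplication
  have hmval := hm _ _ (s.sigma t) s' _ _ _ _ _ h h' hΔh hch' 1 1
  -- evaluate `d_#σ` on `1 ⊗ h` and `1 ⊗ h'`
  set D := LinearMap.prod (TensorProduct.map F.d LinearMap.id)
      (TensorProduct.map LinearMap.id W.d) with hDdef
  have hD1h : D ((1 : B) ⊗ₜ[k] h) = (0, (1 : B) ⊗ₜ[k] W.d h) := by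
    simp [hDdef, LinearMap.prod_apply, TensorProduct.map_tmul, hd1,
      TensorProduct.zero_tmul]
  have hD1h' : D ((1 : B) ⊗ₜ[k] h') = (0, (1 : B) ⊗ₜ[k] W.d h') := by
    simp [hDdef, LinearMap.prod_apply, TensorProduct.map_tmul, hd1,
      TensorProduct.zero_tmul]
  -- the two right-hand side terms of Leibniz have zero first component
  have hRt := hR.2 1 (W.d h) 1 h' _ _ (s.sigma u) s' _ _ _ _ _ hΛ hch'
  have hLv := hL.2 1 h 1 (W.d h') _ _ (s.sigma t) s' _ _ _ _ _ hΔh hlcoh'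
  have key := h_leibniz ((1 : B) ⊗ₜ[k] h) ((1 : B) ⊗ₜ[k] h')
  rw [hD1h, hD1h', hRt, hLv] at key
  have key1 := congrArg Prod.fst key
  simp only [hDdef, LinearMap.prod_apply, Prod.fst_add, Prod.fst, Prod.mk_add_mk,
    add_zero, Pi.prod] at key1
  -- key1 : (map F.d id) (m (1⊗h) (1⊗h')) = 0
  have E : (TensorProduct.map F.d LinearMap.id)
      (m ((1 : B) ⊗ₜ[k] h) ((1 : B) ⊗ₜ[k] h')) = 0 := key1
  rw [hmval, map_sum] at E
  simp only [map_sum, TensorProduct.map_tmul, LinearMap.id_apply] at E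
  -- apply `id ⊗ ε` and then `rid` to `E`
  have E2 := congrArg (fun z => (TensorProduct.rid k M)
    (LinearMap.lTensor M (Coalgebra.counit (R := k)) z)) E
  simp only [map_sum, LinearMap.lTensor_tmul, TensorProduct.rid_tmul, map_zero] at E2
  -- the linear map `ψ x = ∑ ε(l.2) • d_B (σ(x ⊗ l.1))`
  set ψ : H →ₗ[k] M :=
    ∑ l ∈ s', Coalgebra.counit (R := k) l.2 • (F.d ∘ₗ T.coc.flip l.1) with hψdef
  have ψapp : ∀ x : H, ψ x = ∑ l ∈ s',
      Coalgebra.counit (R := k) l.2 • F.d (T.coc x l.1) := by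
    intro x
    simp [hψdef, LinearMap.sum_apply, LinearMap.smul_apply, LinearMap.flip_apply]
  -- massage `E2` into a statement about `ψ`
  have E3 : ∑ x ∈ s.sigma t, Coalgebra.counit (R := k) x.1.1 •
      Coalgebra.counit (R := k) x.2.2 • ψ x.2.1 = 0 := by
    rw [← E2]
    refine Finset.sum_congr rfl fun x _ => ?_
    rw [ψapp, Finset.smul_sum, Finset.smul_sum]
    refine Finset.sum_congr rfl fun l _ => ?_
    rw [one_mul, T.act_unit, smul_mul_assoc, one_mul, map_smul]
    simp only [smul_smul, Bialgebra.counit_mul]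
    congr 1
    ring
  rw [Finset.sum_sigma] at E3
  -- collapse the inner sums
  have E4 : ∑ p ∈ s, Coalgebra.counit (R := k) p.1 • ψ p.2 = 0 := by
    rw [← E3]
    refine Finset.sum_congr rfl fun p _ => ?_
    have hcol : ∑ q ∈ t p, Coalgebra.counit (R := k) q.2 • q.1 = p.2 :=
      collapse_right k H (t p) (fun q => q.1) (fun q => q.2) p.2 (ht p).symm
    rw [← hcol, map_sum, Finset.smul_sum]
    refine Finset.sum_congr rfl fun q _ => ?_
    rw [map_smul]
  have E5 : ψ h = 0 := by
    have hcol : ∑ p ∈ s, Coalgebra.counit (R := k) p.1 • p.2 = h :=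
      collapse_left k H s (fun p => p.1) (fun p => p.2) h hs.symm
    rw [← hcol, map_sum]
    rw [← E4]
    refine Finset.sum_congr rfl fun p _ => ?_
    rw [map_smul]
  -- final collapse
  have hcol' : ∑ l ∈ s', Coalgebra.counit (R := k) l.2 • l.1 = h' :=
    collapse_right k H s' (fun l => l.1) (fun l => l.2) h' hs'.symm
  calc F.d (T.coc h h') = F.d (T.coc h (∑ l ∈ s',
        Coalgebra.counit (R := k) l.2 • l.1)) := by rw [hcol']
    _ = ∑ l ∈ s', Coalgebra.counit (R := k) l.2 • F.d (T.coc h l.1) := by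
        rw [map_sum, map_sum]
        refine Finset.sum_congr rfl fun l _ => ?_
        rw [map_smul, map_smul]
    _ = ψ h := (ψapp h).symm
    _ = 0 := E5

end
end

section
/- In the noncommutative 2-torus A = C⟨u^{±1}, v^{±1}⟩/(vu − e^{iθ}uv), viewed as a cleft extension of B = span{(uv)^k : k ∈ ℤ} by H = C[t, t^{−1}] with cleaving map j(t^k) = u^k and j(t^{−k}) = v^k for k ≥ 0, the induced measure satisfies t^k·(uv)^l = e^{−iθkl}(uv)^l for all k, l ∈ ℤ, and the 2-cocycle satisfies σ(t^k⊗t^s) = 1 = σ(t^{−k}⊗t^{−s}) for k, s ≥ 0, σ(t⊗t^{−1}) = uv. -/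
noncomputable section

lemma aux_zpow {A : Type} [Ring A] [Algebra ℂ A] (a b : Aˣ) (c : ℂ) (hc : c ≠ 0)
    (h : ((b : A)) * a = c • ((a : A) * b)) :
    ∀ l : ℤ, ((b ^ l : Aˣ) : A) * a = c ^ l • ((a : A) * ((b ^ l : Aˣ) : A)) := by
  have hinv : ((b⁻¹ : Aˣ) : A) * a = c⁻¹ • ((a : A) * ((b⁻¹ : Aˣ) : A)) := by
    have e1 : ((b⁻¹ : Aˣ) : A) * (((b : A)) * a) * ((b⁻¹ : Aˣ) : A)
        = (a : A) * ((b⁻¹ : Aˣ) : A) := by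
      rw [← mul_assoc, Units.inv_mul, one_mul]
    have e2 : ((b⁻¹ : Aˣ) : A) * (c • ((a : A) * b)) * ((b⁻¹ : Aˣ) : A)
        = c • (((b⁻¹ : Aˣ) : A) * a) := by
      rw [mul_smul_comm, smul_mul_assoc]
      congr 1
      rw [← mul_assoc, mul_assoc _ (b : A), Units.mul_inv, mul_one]
    have h2 : (a : A) * ((b⁻¹ : Aˣ) : A) = c • (((b⁻¹ : Aˣ) : A) * a) := by
      rw [← e1, h, e2]
    rw [h2, smul_smul, inv_mul_cancel₀ hc, one_smul]
  intro l
  induction l using Int.induction_on with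
  | zero => simp
  | succ n ih =>
      calc ((b ^ ((n : ℤ) + 1) : Aˣ) : A) * a
          = ((b ^ (n : ℤ) : Aˣ) : A) * (((b : A)) * a) := by
            rw [zpow_add_one, Units.val_mul, mul_assoc]
        _ = ((b ^ (n : ℤ) : Aˣ) : A) * (c • ((a : A) * b)) := by rw [h]
        _ = c • ((((b ^ (n : ℤ) : Aˣ) : A) * a) * (b : A)) := by
            rw [mul_smul_comm, mul_assoc]
        _ = c • ((c ^ (n : ℤ) • ((a : A) * ((b ^ (n : ℤ) : Aˣ) : A))) * (b : A)) := by
            rw [ih]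
        _ = (c ^ (n : ℤ) * c) • ((a : A) * ((b ^ ((n : ℤ) + 1) : Aˣ) : A)) := by
            rw [smul_mul_assoc, smul_smul, mul_assoc, ← Units.val_mul, ← zpow_add_one,
              mul_comm c]
        _ = c ^ ((n : ℤ) + 1) • ((a : A) * ((b ^ ((n : ℤ) + 1) : Aˣ) : A)) := by
            rw [zpow_add_one₀ hc]
  | pred n ih =>
      calc ((b ^ (-(n : ℤ) - 1) : Aˣ) : A) * a
          = ((b ^ (-(n : ℤ)) : Aˣ) : A) * (((b⁻¹ : Aˣ) : A) * a) := by
            rw [zpow_sub_one, Units.val_mul, mul_assoc]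
        _ = ((b ^ (-(n : ℤ)) : Aˣ) : A) * (c⁻¹ • ((a : A) * ((b⁻¹ : Aˣ) : A))) := by
            rw [hinv]
        _ = c⁻¹ • ((((b ^ (-(n : ℤ)) : Aˣ) : A) * a) * ((b⁻¹ : Aˣ) : A)) := by
            rw [mul_smul_comm, mul_assoc]
        _ = c⁻¹ • ((c ^ (-(n : ℤ)) • ((a : A) * ((b ^ (-(n : ℤ)) : Aˣ) : A))) * ((b⁻¹ : Aˣ) : A)) := by
            rw [ih]
        _ = (c ^ (-(n : ℤ)) * c⁻¹) • ((a : A) * ((b ^ (-(n : ℤ) - 1) : Aˣ) : A)) := by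
            rw [smul_mul_assoc, smul_smul, mul_assoc, ← Units.val_mul, ← zpow_sub_one,
              mul_comm c⁻¹]
        _ = c ^ (-(n : ℤ) - 1) • ((a : A) * ((b ^ (-(n : ℤ) - 1) : Aˣ) : A)) := by
            rw [zpow_sub_one₀ hc]

lemma aux_pow {A : Type} [Ring A] [Algebra ℂ A] (a b : Aˣ) (c : ℂ) (hc : c ≠ 0)
    (h : ((b : A)) * a = c • ((a : A) * b)) :
    ∀ (m : ℕ) (l : ℤ),
      ((b ^ l : Aˣ) : A) * (a : A) ^ m = (c ^ l) ^ m • ((a : A) ^ m * ((b ^ l : Aˣ) : A)) := by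
  intro m
  induction m with
  | zero => intro l; simp
  | succ m ih =>
      intro l
      calc ((b ^ l : Aˣ) : A) * (a : A) ^ (m + 1)
          = (((b ^ l : Aˣ) : A) * (a : A) ^ m) * (a : A) := by rw [pow_succ, mul_assoc]
        _ = ((c ^ l) ^ m • ((a : A) ^ m * ((b ^ l : Aˣ) : A))) * (a : A) := by rw [ih]
        _ = (c ^ l) ^ m • ((a : A) ^ m * (((b ^ l : Aˣ) : A) * (a : A))) := by
            rw [smul_mul_assoc, mul_assoc]
        _ = (c ^ l) ^ m • ((a : A) ^ m * (c ^ l • ((a : A) * ((b ^ l : Aˣ) : A)))) := by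
            rw [aux_zpow a b c hc h l]
        _ = ((c ^ l) ^ m * c ^ l) • ((a : A) ^ (m + 1) * ((b ^ l : Aˣ) : A)) := by
            rw [mul_smul_comm, smul_smul, pow_succ (a : A) m, mul_assoc]
        _ = (c ^ l) ^ (m + 1) • ((a : A) ^ (m + 1) * ((b ^ l : Aˣ) : A)) := by
            rw [pow_succ (c ^ l) m]

lemma aux_conj {A : Type} [Ring A] [Algebra ℂ A] (a b : Aˣ) (c : ℂ) (hc : c ≠ 0)
    (h : ((b : A)) * a = c • ((a : A) * b)) (m : ℕ) (l : ℤ) :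
    (a : A) ^ m * ((b ^ l : Aˣ) : A) * ((a⁻¹ : Aˣ) : A) ^ m
      = ((c ^ l) ^ m)⁻¹ • ((b ^ l : Aˣ) : A) := by
  have hs : (c ^ l) ^ m ≠ 0 := pow_ne_zero _ (zpow_ne_zero _ hc)
  have h1 : (a : A) ^ m * ((b ^ l : Aˣ) : A)
      = ((c ^ l) ^ m)⁻¹ • (((b ^ l : Aˣ) : A) * (a : A) ^ m) := by
    rw [aux_pow a b c hc h m l, smul_smul, inv_mul_cancel₀ hs, one_smul]
  have h2 : (a : A) ^ m * ((a⁻¹ : Aˣ) : A) ^ m = 1 := by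
    rw [← Units.val_pow_eq_pow_val, ← Units.val_pow_eq_pow_val, inv_pow, Units.mul_inv]
  rw [h1, smul_mul_assoc, mul_assoc, h2, mul_one]

lemma pow_mul_inv_pow {A : Type} [Ring A] (a : Aˣ) (m : ℕ) :
    (a : A) ^ m * ((a⁻¹ : Aˣ) : A) ^ m = 1 := by
  rw [← Units.val_pow_eq_pow_val, ← Units.val_pow_eq_pow_val, inv_pow, Units.mul_inv]


/-- In the noncommutative 2-torus `A` (generated by invertible `u`, `v`
with `vu = e^{iθ}uv`), viewed as a cleft extension of `B = span{(uv)^k}` by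
`H = ℂ[t,t⁻¹]` with cleaving map `j(t^k) = u^k`, `j(t^{-k}) = v^k` (for `k ≥ 0`) and
convolution inverse `j⁻¹(t^k) = u^{-k}`, `j⁻¹(t^{-k}) = v^{-k}`, the induced measure
`h·b = j(h₁) b j⁻¹(h₂)` satisfies `t^k·(uv)^l = e^{-iθkl}(uv)^l` for all `k, l ∈ ℤ`, and
the 2-cocycle `σ(h ⊗ h') = j(h₁)j(h'₁)j⁻¹(h₂h'₂)` satisfies
`σ(t^k ⊗ t^s) = 1 = σ(t^{-k} ⊗ t^{-s})` for `k, s ≥ 0` and `σ(t ⊗ t⁻¹) = uv`.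
(Since every `tⁿ` is group-like, `j(h₁) b j⁻¹(h₂) = j(tⁿ) b j⁻¹(tⁿ)` and
`j(h₁)j(h'₁)j⁻¹(h₂h'₂) = j(tⁿ)j(tᵐ)j⁻¹(tⁿ⁺ᵐ)` on basis elements.) -/
theorem noncommutative_torus_measure_and_cocycle
    (θ : ℝ) (A : Type) [Ring A] [Algebra ℂ A] (u v : Aˣ)
    (rel : ((v : A) * (u : A)) = Complex.exp (θ * Complex.I) • ((u : A) * (v : A)))
    -- the cleaving map and its convolution inverse, on the basis `tⁿ`, `n ∈ ℤ`:
    (j j' : ℤ → A)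
    (hj : ∀ n : ℤ, j n = if 0 ≤ n then (u : A) ^ n.toNat else (v : A) ^ (-n).toNat)
    (hj' : ∀ n : ℤ, j' n = if 0 ≤ n then ((u⁻¹ : Aˣ) : A) ^ n.toNat
                            else ((v⁻¹ : Aˣ) : A) ^ (-n).toNat) :
    -- the measure: `t^k · (uv)^l = e^{-iθkl} (uv)^l`
    (∀ k l : ℤ,
      j k * (((u * v) ^ l : Aˣ) : A) * j' k
        = Complex.exp (-((θ : ℂ) * (k : ℂ) * (l : ℂ)) * Complex.I)
            • (((u * v) ^ l : Aˣ) : A)) ∧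
    -- the cocycle on nonnegative powers: `σ(t^k ⊗ t^s) = 1`
    (∀ k s : ℕ, j (k : ℤ) * j (s : ℤ) * j' ((k : ℤ) + (s : ℤ)) = 1) ∧
    -- and on nonpositive powers: `σ(t^{-k} ⊗ t^{-s}) = 1`
    (∀ k s : ℕ, j (-(k : ℤ)) * j (-(s : ℤ)) * j' (-((k : ℤ) + (s : ℤ))) = 1) ∧
    -- and `σ(t ⊗ t⁻¹) = uv`:
    (j 1 * j (-1) * j' 0 = (u : A) * (v : A)) := by
  set q : ℂ := Complex.exp (θ * Complex.I) with hqdef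
  have hq : q ≠ 0 := Complex.exp_ne_zero _
  set w : Aˣ := u * v with hwdef
  have hwu : (w : A) * u = q • ((u : A) * w) := by
    rw [hwdef, Units.val_mul, mul_assoc, rel, mul_smul_comm]
  have hvw : (v : A) * w = q • ((w : A) * v) := by
    rw [hwdef, Units.val_mul, ← mul_assoc, rel, smul_mul_assoc]
  have hwv : (w : A) * v = q⁻¹ • ((v : A) * w) := by
    rw [hvw, smul_smul, inv_mul_cancel₀ hq, one_smul]
  have hexp : ∀ n : ℤ, q ^ n = Complex.exp ((n : ℂ) * (θ * Complex.I)) := fun n =>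
    (Complex.exp_int_mul _ n).symm
  have jneg : ∀ k : ℕ, j (-(k : ℤ)) = (v : A) ^ k := by
    intro k
    cases k with
    | zero => simp [hj]
    | succ k =>
        rw [hj, if_neg (by omega)]
        norm_num
  have j'neg : ∀ k : ℕ, j' (-(k : ℤ)) = ((v⁻¹ : Aˣ) : A) ^ k := by
    intro k
    cases k with
    | zero => simp [hj']
    | succ k =>
        rw [hj', if_neg (by omega)]
        norm_num
  refine ⟨?_, ?_, ?_, ?_⟩
  · intro k l
    rcases le_or_gt 0 k with hk | hk
    · have hm : ((k.toNat : ℤ)) = k := Int.toNat_of_nonneg hk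
      rw [hj, if_pos hk, hj', if_pos hk]
      rw [aux_conj u w q hq hwu k.toNat l]
      congr 1
      rw [← zpow_natCast (q ^ l), ← zpow_mul, ← zpow_neg, hexp]
      congr 1
      have : ((k.toNat : ℤ) : ℂ) = (k : ℂ) := by exact_mod_cast congrArg Int.cast hm
      push_cast [this]
      ring
    · have hm : (((-k).toNat : ℤ)) = -k := Int.toNat_of_nonneg (by omega)
      rw [hj, if_neg (by omega), hj', if_neg (by omega)]
      rw [aux_conj v w q⁻¹ (inv_ne_zero hq) hwv (-k).toNat l]
      congr 1
      rw [inv_zpow, ← zpow_neg, ← zpow_natCast (q ^ (-l)), ← zpow_mul, ← zpow_neg, hexp]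
      congr 1
      have : (((-k).toNat : ℤ) : ℂ) = -(k : ℂ) := by exact_mod_cast congrArg Int.cast hm
      push_cast [this]
      ring
  · intro k s
    rw [hj, if_pos (by positivity), hj, if_pos (by positivity), hj', if_pos (by positivity)]
    have h1 : ((k : ℤ)).toNat = k := Int.toNat_natCast k
    have h2 : ((s : ℤ)).toNat = s := Int.toNat_natCast s
    have h3 : ((k : ℤ) + (s : ℤ)).toNat = k + s := by omega
    rw [h1, h2, h3, ← pow_add, pow_mul_inv_pow]
  · intro k s
    rw [jneg, jneg, ← Nat.cast_add, j'neg, ← pow_add, pow_mul_inv_pow]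
  · have e1 : j 1 = (u : A) := by rw [hj, if_pos (by norm_num)]; norm_num
    have e2 : j (-1) = (v : A) := by
      have := jneg 1
      norm_num at this
      exact this
    have e3 : j' 0 = 1 := by rw [hj', if_pos le_rfl]; norm_num
    rw [e1, e2, e3, mul_one]

end
end

section
/- If an algebra A admits a nonzero FODC (Ω¹(A), d_A) such that Ω¹(A) is torsion-free as a left (or right) A-module, then A has no zero divisors. -/
noncomputable section

variable (k : Type) [Field k]

/-- If an algebra `A` admits a nonzero FODC `(Ω¹(A), d_A)` such that
`Ω¹(A)` is torsion-free as a left (or right) `A`-module, then `A` has no zero divisors. -/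
theorem no_zero_divisors_of_torsion_free_nonzero_fodc
    (A M : Type) [Ring A] [Algebra k A] [AddCommGroup M] [Module k M]
    (F : FODCData k A M)
    (h_nonzero : ∃ m : M, m ≠ 0)
    (h_tf : (∀ (a : A) (m : M), a ≠ 0 → F.l a m = 0 → m = 0) ∨
            (∀ (a : A) (m : M), a ≠ 0 → F.r m a = 0 → m = 0)) :
    ∀ a b : A, a * b = 0 → a = 0 ∨ b = 0 := by
  intro a b hab
  by_contra hcon
  push_neg at hcon
  obtain ⟨ha, hb⟩ := hcon
  obtain ⟨m, hm⟩ := h_nonzero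
  apply hm
  rcases h_tf with htf | htf
  · have h1 : F.l a (F.l b m) = 0 := by
      rw [← F.mul_l, hab]
      simp
    exact htf b m hb (htf a (F.l b m) ha h1)
  · have h1 : F.r (F.r m a) b = 0 := by
      rw [F.r_mul, hab]
      simp
    exact htf a m ha (htf b (F.r m a) hb h1)

end
end

section
/- For the crossed product calculus on B#_σH, the vertical map ver: Ω¹(B#_σH) → (B#_σH)⊗^{coH}Ω¹(H), given on β⊗h + b⊗γ by b⊗γ₋₂⊗S(γ₋₁)γ₀, is well-defined, left B#_σH-linear, and surjective with kernel equal to Ω¹(B)⊗H, yielding the short exact sequence 0 → Ω¹(B)⊗H → Ω¹(B#_σH) → (B#_σH)⊗^{coH}Ω¹(H) → 0 of left B#_σH-modules; hence the crossed product calculus is a quantum principal bundle. -/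
open TensorProduct

noncomputable section

namespace QPB

variable {k : Type} [Field k]

/-- A canonical finite representation of a tensor as a sum of pure tensors. -/
def crep {P Q : Type} [AddCommGroup P] [Module k P] [AddCommGroup Q] [Module k Q]
    (z : P ⊗[k] Q) : Finset (P × Q) :=
  (TensorProduct.exists_finset (R := k) z).choose

lemma crep_eq {P Q : Type} [AddCommGroup P] [Module k P] [AddCommGroup Q] [Module k Q]
    (z : P ⊗[k] Q) : ∑ p ∈ crep z, p.1 ⊗ₜ[k] p.2 = z :=
  ((TensorProduct.exists_finset (R := k) z).choose_spec).symm

lemma exists_rep3 {P Q R : Type} [AddCommGroup P] [Module k P] [AddCommGroup Q] [Module k Q]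
    [AddCommGroup R] [Module k R] (x : P ⊗[k] (Q ⊗[k] R)) :
    ∃ (ι : Type) (s : Finset ι) (f : ι → P) (g : ι → Q) (e : ι → R),
      ∑ i ∈ s, f i ⊗ₜ[k] (g i ⊗ₜ[k] e i) = x := by
  classical
  refine ⟨Σ _ : P × (Q ⊗[k] R), Q × R,
    (crep x).sigma (fun i => crep i.2),
    fun i => i.1.1, fun i => i.2.1, fun i => i.2.2, ?_⟩
  rw [Finset.sum_sigma]
  calc ∑ i ∈ crep x, ∑ j ∈ crep i.2, i.1 ⊗ₜ[k] (j.1 ⊗ₜ[k] j.2)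
      = ∑ i ∈ crep x, i.1 ⊗ₜ[k] i.2 := by
        refine Finset.sum_congr rfl fun i _ => ?_
        rw [← tmul_sum]
        exact congrArg _ (crep_eq i.2)
    _ = x := crep_eq x

section Coalg

variable {C : Type} [AddCommGroup C] [Module k C] [Coalgebra k C]

lemma rep_counit_left {ι : Type} (s : Finset ι) (f g : ι → C) (a : C)
    (h : ∑ i ∈ s, f i ⊗ₜ[k] g i = Coalgebra.comul (R := k) a) :
    ∑ i ∈ s, Coalgebra.counit (R := k) (f i) • g i = a := by
  have h2 := congrArg (fun z => (TensorProduct.lid k C)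
    ((LinearMap.rTensor C (Coalgebra.counit (R := k))) z)) h
  simpa [map_sum] using h2

lemma rep_counit_right {ι : Type} (s : Finset ι) (f g : ι → C) (a : C)
    (h : ∑ i ∈ s, f i ⊗ₜ[k] g i = Coalgebra.comul (R := k) a) :
    ∑ i ∈ s, Coalgebra.counit (R := k) (g i) • f i = a := by
  have h2 := congrArg (fun z => (TensorProduct.rid k C)
    ((LinearMap.lTensor C (Coalgebra.counit (R := k))) z)) h
  simpa [map_sum] using h2

lemma conv_unique {A : Type} [Ring A] [Algebra k A] (F G G' : C →ₗ[k] A)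
    (h1 : ∀ (c : C) (s : Finset (C × C)),
      (∑ p ∈ s, p.1 ⊗ₜ[k] p.2 = Coalgebra.comul (R := k) c) →
      ∑ p ∈ s, G p.1 * F p.2 = Coalgebra.counit (R := k) c • (1 : A))
    (h2 : ∀ (c : C) (s : Finset (C × C)),
      (∑ p ∈ s, p.1 ⊗ₜ[k] p.2 = Coalgebra.comul (R := k) c) →
      ∑ p ∈ s, F p.1 * G' p.2 = Coalgebra.counit (R := k) c • (1 : A))
    (a : C) : G a = G' a := by
  classical
  set J : C ⊗[k] (C ⊗[k] C) →ₗ[k] A :=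
    (LinearMap.mul' k A).comp (TensorProduct.map G ((LinearMap.mul' k A).comp
      (TensorProduct.map F G'))) with hJ
  have Japp : ∀ (x y z : C), J (x ⊗ₜ[k] (y ⊗ₜ[k] z)) = G x * (F y * G' z) := by
    intro x y z; simp [hJ, LinearMap.mul'_apply]
  set E : C ⊗[k] (C ⊗[k] C) :=
    (LinearMap.lTensor C (Coalgebra.comul (R := k))) (Coalgebra.comul (R := k) a) with hE
  have hs := crep_eq (Coalgebra.comul (R := k) a)
  have hEa : E = ∑ p ∈ crep (Coalgebra.comul (R := k) a),
      p.1 ⊗ₜ[k] (Coalgebra.comul (R := k) p.2) := by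
    have h2 := congrArg (LinearMap.lTensor C (Coalgebra.comul (R := k))) hs
    simp only [map_sum, LinearMap.lTensor_tmul] at h2
    rw [hE, ← h2]
  have hEb : E = ∑ p ∈ crep (Coalgebra.comul (R := k) a),
      (TensorProduct.assoc k C C C) ((Coalgebra.comul (R := k) p.1) ⊗ₜ[k] p.2) := by
    have h2 := congrArg (fun z => (TensorProduct.assoc k C C C)
      ((LinearMap.rTensor C (Coalgebra.comul (R := k))) z)) hs
    simp only [map_sum, LinearMap.rTensor_tmul] at h2
    rw [hE, ← Coalgebra.coassoc_apply a, ← h2]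
  have way1 : J E = G a := by
    rw [hEa, map_sum]
    have step : ∀ p ∈ crep (Coalgebra.comul (R := k) a),
        J (p.1 ⊗ₜ[k] (Coalgebra.comul (R := k) p.2))
          = Coalgebra.counit (R := k) p.2 • G p.1 := by
      intro p _
      rw [← crep_eq (Coalgebra.comul (R := k) p.2), tmul_sum, map_sum]
      simp_rw [Japp]
      rw [← Finset.mul_sum, h2 p.2 _ (crep_eq _), mul_smul_comm, mul_one]
    rw [Finset.sum_congr rfl step]
    have h3 := congrArg G (rep_counit_right _ Prod.fst Prod.snd a hs)
    simpa [map_sum] using h3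
  have way2 : J E = G' a := by
    rw [hEb, map_sum]
    have step : ∀ p ∈ crep (Coalgebra.comul (R := k) a),
        J ((TensorProduct.assoc k C C C) ((Coalgebra.comul (R := k) p.1) ⊗ₜ[k] p.2))
          = Coalgebra.counit (R := k) p.1 • G' p.2 := by
      intro p _
      rw [← crep_eq (Coalgebra.comul (R := k) p.1), sum_tmul, map_sum, map_sum]
      simp_rw [assoc_tmul, Japp, ← mul_assoc]
      rw [← Finset.sum_mul, h1 p.1 _ (crep_eq _), smul_mul_assoc, one_mul]
    rw [Finset.sum_congr rfl step]
    have h3 := congrArg G' (rep_counit_left _ Prod.fst Prod.snd a hs)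
    simpa [map_sum] using h3
  rw [← way1, way2]

end Coalg

section Hopf

variable {H : Type} [Ring H] [HopfAlgebra k H]

lemma rep_antipode_left {ι : Type} (s : Finset ι) (f g : ι → H) (a : H)
    (h : ∑ i ∈ s, f i ⊗ₜ[k] g i = Coalgebra.comul (R := k) a) :
    ∑ i ∈ s, HopfAlgebra.antipode (R := k) (f i) * g i
      = Coalgebra.counit (R := k) a • (1 : H) := by
  have h2 := congrArg (fun z => LinearMap.mul' k H
    ((LinearMap.rTensor H (HopfAlgebra.antipode (R := k))) z)) h
  simpa [map_sum, Algebra.smul_def] using h2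

lemma rep_antipode_right {ι : Type} (s : Finset ι) (f g : ι → H) (a : H)
    (h : ∑ i ∈ s, f i ⊗ₜ[k] g i = Coalgebra.comul (R := k) a) :
    ∑ i ∈ s, f i * HopfAlgebra.antipode (R := k) (g i)
      = Coalgebra.counit (R := k) a • (1 : H) := by
  have h2 := congrArg (fun z => LinearMap.mul' k H
    ((LinearMap.lTensor H (HopfAlgebra.antipode (R := k))) z)) h
  simpa [map_sum, Algebra.smul_def] using h2

lemma antipode_one' : HopfAlgebra.antipode (R := k) (1 : H) = 1 := by
  have h := HopfAlgebra.mul_antipode_rTensor_comul_apply (R := k) (A := H) 1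
  simpa [Algebra.TensorProduct.one_def] using h

/-- comultiplication of `H ⊗ H` on pure tensors, via chosen representations -/
lemma comul_tmul (a b : H) :
    Coalgebra.comul (R := k) (a ⊗ₜ[k] b)
      = ∑ p ∈ crep (Coalgebra.comul (R := k) a), ∑ q ∈ crep (Coalgebra.comul (R := k) b),
          (p.1 ⊗ₜ[k] q.1) ⊗ₜ[k] (p.2 ⊗ₜ[k] q.2) := by
  have : Coalgebra.comul (R := k) (a ⊗ₜ[k] b)
      = (TensorProduct.tensorTensorTensorComm k H H H H)
        ((Coalgebra.comul (R := k) a) ⊗ₜ[k] (Coalgebra.comul (R := k) b)) := rfl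
  rw [this]
  conv_lhs => rw [← crep_eq (Coalgebra.comul (R := k) a), ← crep_eq (Coalgebra.comul (R := k) b)]
  simp only [sum_tmul, tmul_sum, map_sum, tensorTensorTensorComm_tmul]
  exact Finset.sum_comm

lemma counit_tmul (a b : H) :
    Coalgebra.counit (R := k) (a ⊗ₜ[k] b)
      = Coalgebra.counit (R := k) a * Coalgebra.counit (R := k) b := by
  rw [TensorProduct.counit_tmul, smul_eq_mul, mul_comm]

lemma antipode_mul' (a b : H) :
    HopfAlgebra.antipode (R := k) (a * b)
      = HopfAlgebra.antipode (R := k) b * HopfAlgebra.antipode (R := k) a := by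
  have main := conv_unique (C := H ⊗[k] H) (A := H)
    (LinearMap.mul' k H)
    ((HopfAlgebra.antipode (R := k)).comp (LinearMap.mul' k H))
    ((LinearMap.mul' k H).comp ((TensorProduct.map (HopfAlgebra.antipode (R := k))
      (HopfAlgebra.antipode (R := k))).comp (TensorProduct.comm k H H).toLinearMap))
    ?_ ?_ (a ⊗ₜ[k] b)
  · simpa [LinearMap.mul'_apply] using main
  · -- h1
    intro c s hrep
    have key : ∀ z : H ⊗[k] H,
        (LinearMap.mul' k H) ((TensorProduct.map
          ((HopfAlgebra.antipode (R := k)).comp (LinearMap.mul' k H)) (LinearMap.mul' k H))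
          (Coalgebra.comul (R := k) z)) = Coalgebra.counit (R := k) z • (1 : H) := by
      intro z
      induction z using TensorProduct.induction_on with
      | zero => simp
      | add x y hx hy => rw [map_add, map_add, map_add, map_add, hx, hy, ← add_smul]
      | tmul x y =>
        rw [comul_tmul]
        have hrep2 : ∑ pq ∈ (crep (Coalgebra.comul (R := k) x)) ×ˢ
            (crep (Coalgebra.comul (R := k) y)),
            (pq.1.1 * pq.2.1) ⊗ₜ[k] (pq.1.2 * pq.2.2) = Coalgebra.comul (R := k) (x * y) := by
          rw [Bialgebra.comul_mul]
          conv_rhs => rw [← crep_eq (Coalgebra.comul (R := k) x),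
            ← crep_eq (Coalgebra.comul (R := k) y)]
          rw [Finset.sum_mul_sum, Finset.sum_product]
          simp [Algebra.TensorProduct.tmul_mul_tmul]
        have hal := rep_antipode_left _ _ _ _ hrep2
        rw [Finset.sum_product] at hal
        simp only [map_sum, LinearMap.mul'_apply, TensorProduct.map_tmul,
          LinearMap.comp_apply] at hal ⊢
        rw [counit_tmul, ← Bialgebra.counit_mul, ← hal]
    have h2 := congrArg (fun z => (LinearMap.mul' k H) ((TensorProduct.map
      ((HopfAlgebra.antipode (R := k)).comp (LinearMap.mul' k H)) (LinearMap.mul' k H)) z)) hrep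
    simp only [map_sum, TensorProduct.map_tmul, LinearMap.mul'_apply,
      LinearMap.comp_apply] at h2
    exact h2.trans (key c)
  · -- h2
    intro c s hrep
    have key : ∀ z : H ⊗[k] H,
        (LinearMap.mul' k H) ((TensorProduct.map (LinearMap.mul' k H)
          ((LinearMap.mul' k H).comp ((TensorProduct.map (HopfAlgebra.antipode (R := k))
            (HopfAlgebra.antipode (R := k))).comp (TensorProduct.comm k H H).toLinearMap)))
          (Coalgebra.comul (R := k) z)) = Coalgebra.counit (R := k) z • (1 : H) := by
      intro z
      induction z using TensorProduct.induction_on with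
      | zero => simp
      | add x y hx hy => rw [map_add, map_add, map_add, map_add, hx, hy, ← add_smul]
      | tmul x y =>
        rw [comul_tmul]
        simp only [map_sum, TensorProduct.map_tmul, LinearMap.mul'_apply, LinearMap.comp_apply,
          LinearEquiv.coe_coe, TensorProduct.comm_tmul]
        have inner : ∀ p : H × H, ∑ q ∈ crep (Coalgebra.comul (R := k) y),
            p.1 * q.1 * (HopfAlgebra.antipode (R := k) q.2 * HopfAlgebra.antipode (R := k) p.2)
            = Coalgebra.counit (R := k) y • (p.1 * HopfAlgebra.antipode (R := k) p.2) := by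
          intro p
          have hq := rep_antipode_right (k := k) _ Prod.fst Prod.snd y
            (crep_eq (Coalgebra.comul (R := k) y))
          calc ∑ q ∈ crep (Coalgebra.comul (R := k) y),
              p.1 * q.1 * (HopfAlgebra.antipode (R := k) q.2 * HopfAlgebra.antipode (R := k) p.2)
              = p.1 * (∑ q ∈ crep (Coalgebra.comul (R := k) y),
                  q.1 * HopfAlgebra.antipode (R := k) q.2) * HopfAlgebra.antipode (R := k) p.2 := by
                rw [Finset.mul_sum, Finset.sum_mul]
                exact Finset.sum_congr rfl fun q _ => by simp [mul_assoc]
            _ = Coalgebra.counit (R := k) y • (p.1 * HopfAlgebra.antipode (R := k) p.2) := by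
                rw [hq, mul_smul_comm, smul_mul_assoc, mul_one]
        rw [Finset.sum_congr rfl fun p _ => inner p, ← Finset.smul_sum,
          rep_antipode_right _ Prod.fst Prod.snd x (crep_eq _), counit_tmul, smul_smul,
          mul_comm]
    have h2 := congrArg (fun z => (LinearMap.mul' k H) ((TensorProduct.map (LinearMap.mul' k H)
      ((LinearMap.mul' k H).comp ((TensorProduct.map (HopfAlgebra.antipode (R := k))
        (HopfAlgebra.antipode (R := k))).comp (TensorProduct.comm k H H).toLinearMap))) z)) hrep
    simp only [map_sum, TensorProduct.map_tmul, LinearMap.mul'_apply,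
      LinearMap.comp_apply] at h2
    exact h2.trans (key c)

lemma comul_antipode' (a : H) :
    Coalgebra.comul (R := k) (HopfAlgebra.antipode (R := k) a)
      = (TensorProduct.comm k H H) ((TensorProduct.map (HopfAlgebra.antipode (R := k))
          (HopfAlgebra.antipode (R := k))) (Coalgebra.comul (R := k) a)) := by
  classical
  have main := conv_unique (C := H) (A := H ⊗[k] H)
    (Coalgebra.comul (R := k))
    ((Coalgebra.comul (R := k)).comp (HopfAlgebra.antipode (R := k)))
    ((TensorProduct.comm k H H).toLinearMap.comp
      ((TensorProduct.map (HopfAlgebra.antipode (R := k))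
        (HopfAlgebra.antipode (R := k))).comp (Coalgebra.comul (R := k))))
    ?_ ?_ a
  · simpa using main
  · -- h1
    intro c s hrep
    have step : ∑ p ∈ s, Coalgebra.comul (R := k) (HopfAlgebra.antipode (R := k) p.1)
        * Coalgebra.comul (R := k) p.2 = Coalgebra.counit (R := k) c • 1 := by
      simp_rw [← Bialgebra.comul_mul]
      rw [← map_sum, rep_antipode_left _ Prod.fst Prod.snd c hrep, map_smul,
        Bialgebra.comul_one]
    exact step
  · -- h2
    intro c s hrep
    classical
    set Θ : H ⊗[k] (H ⊗[k] (H ⊗[k] H)) →ₗ[k] H ⊗[k] H :=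
      (TensorProduct.map (LinearMap.mul' k H) (LinearMap.mul' k H)).comp
        ((TensorProduct.tensorTensorTensorComm k H H H H).toLinearMap.comp
          (((TensorProduct.assoc k H H (H ⊗[k] H)).symm.toLinearMap).comp
            (LinearMap.lTensor H (LinearMap.lTensor H
              ((TensorProduct.map (HopfAlgebra.antipode (R := k))
                (HopfAlgebra.antipode (R := k))).comp
                (TensorProduct.comm k H H).toLinearMap))))) with hTh
    have Θapp : ∀ x y z t : H, Θ (x ⊗ₜ[k] (y ⊗ₜ[k] (z ⊗ₜ[k] t)))
        = (x * HopfAlgebra.antipode (R := k) t) ⊗ₜ[k] (y * HopfAlgebra.antipode (R := k) z) := by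
      intro x y z t
      simp [hTh, tensorTensorTensorComm_tmul, assoc_symm_tmul, LinearMap.mul'_apply]
    set f1 : H ⊗[k] H →ₗ[k] H ⊗[k] (H ⊗[k] H) :=
      LinearMap.lTensor H (Coalgebra.comul (R := k)) with hf1
    set f2 : H ⊗[k] H →ₗ[k] H ⊗[k] (H ⊗[k] H) :=
      (TensorProduct.assoc k H H H).toLinearMap.comp
        (LinearMap.rTensor H (Coalgebra.comul (R := k))) with hf2
    set E : H ⊗[k] (H ⊗[k] H) := f1 (Coalgebra.comul (R := k) c) with hE
    have hEa : E = ∑ p ∈ s, p.1 ⊗ₜ[k] Coalgebra.comul (R := k) p.2 := by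
      have h2 := congrArg f1 hrep
      simp only [map_sum, hf1, LinearMap.lTensor_tmul] at h2
      rw [hE, ← h2]
    have hEb : E = ∑ p ∈ s,
        (TensorProduct.assoc k H H H) ((Coalgebra.comul (R := k) p.1) ⊗ₜ[k] p.2) := by
      have h2 := congrArg f2 hrep
      simp only [map_sum, hf2, LinearMap.comp_apply, LinearMap.rTensor_tmul,
        LinearEquiv.coe_coe] at h2
      have hco : f2 (Coalgebra.comul (R := k) c) = f1 (Coalgebra.comul (R := k) c) := by
        simp only [hf1, hf2, LinearMap.comp_apply, LinearEquiv.coe_coe]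
        exact Coalgebra.coassoc_apply c
      rw [hE, ← hco, hf2]
      simp only [LinearMap.comp_apply, LinearEquiv.coe_coe]
      rw [← h2]
    have hZ : (LinearMap.lTensor H f1) E = (LinearMap.lTensor H f2) E := by
      rw [hEa, map_sum, map_sum]
      refine Finset.sum_congr rfl fun p _ => ?_
      rw [LinearMap.lTensor_tmul, LinearMap.lTensor_tmul]
      congr 1
      simp only [hf1, hf2, LinearMap.comp_apply, LinearEquiv.coe_coe]
      exact (Coalgebra.coassoc_apply p.2).symm
    have calc1 : Θ ((LinearMap.lTensor H f1) E)
        = ∑ p ∈ s, Coalgebra.comul (R := k) p.1 * ((TensorProduct.comm k H H)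
            ((TensorProduct.map (HopfAlgebra.antipode (R := k)) (HopfAlgebra.antipode (R := k)))
              (Coalgebra.comul (R := k) p.2))) := by
      rw [hEb, map_sum, map_sum]
      refine Finset.sum_congr rfl fun p _ => ?_
      conv_lhs => rw [← crep_eq (Coalgebra.comul (R := k) p.1)]
      conv_rhs => rw [← crep_eq (Coalgebra.comul (R := k) p.1),
        ← crep_eq (Coalgebra.comul (R := k) p.2)]
      rw [sum_tmul, map_sum, map_sum, map_sum]
      simp only [assoc_tmul, LinearMap.lTensor_tmul, hf1]
      simp only [map_sum, TensorProduct.map_tmul, LinearEquiv.coe_coe, TensorProduct.comm_tmul]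
      rw [Finset.sum_mul_sum]
      refine Finset.sum_congr rfl fun r _ => ?_
      conv_lhs => rw [← crep_eq (Coalgebra.comul (R := k) p.2)]
      rw [tmul_sum, tmul_sum, map_sum]
      simp only [Θapp, Algebra.TensorProduct.tmul_mul_tmul]
    have calc2 : Θ ((LinearMap.lTensor H f2) E) = Coalgebra.counit (R := k) c • 1 := by
      rw [hEb, map_sum, map_sum]
      have step : ∀ p ∈ s, Θ ((LinearMap.lTensor H f2)
          ((TensorProduct.assoc k H H H) ((Coalgebra.comul (R := k) p.1) ⊗ₜ[k] p.2)))
          = (p.1 * HopfAlgebra.antipode (R := k) p.2) ⊗ₜ[k] (1 : H) := by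
        intro p _
        conv_lhs => rw [← crep_eq (Coalgebra.comul (R := k) p.1)]
        rw [sum_tmul, map_sum, map_sum, map_sum]
        simp only [assoc_tmul, LinearMap.lTensor_tmul, hf2, LinearMap.comp_apply,
          LinearMap.rTensor_tmul, LinearEquiv.coe_coe]
        have inner : ∀ r : H × H, Θ (r.1 ⊗ₜ[k] ((TensorProduct.assoc k H H H)
            ((Coalgebra.comul (R := k) r.2) ⊗ₜ[k] p.2)))
            = Coalgebra.counit (R := k) r.2 •
              ((r.1 * HopfAlgebra.antipode (R := k) p.2) ⊗ₜ[k] (1 : H)) := by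
          intro r
          conv_lhs => rw [← crep_eq (Coalgebra.comul (R := k) r.2)]
          rw [sum_tmul, map_sum, tmul_sum, map_sum]
          simp only [assoc_tmul, Θapp]
          rw [← tmul_sum, rep_antipode_right (k := k) _ Prod.fst Prod.snd r.2
            (crep_eq (Coalgebra.comul (R := k) r.2)), tmul_smul]
        have switch : ∀ r : H × H, Coalgebra.counit (R := k) r.2 •
            ((r.1 * HopfAlgebra.antipode (R := k) p.2) ⊗ₜ[k] (1 : H))
            = ((Coalgebra.counit (R := k) r.2 • r.1) * HopfAlgebra.antipode (R := k) p.2)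
              ⊗ₜ[k] (1 : H) := by
          intro r; rw [smul_tmul', smul_mul_assoc]
        rw [Finset.sum_congr rfl fun r _ => (inner r).trans (switch r), ← sum_tmul,
          ← Finset.sum_mul, rep_counit_right (k := k) _ Prod.fst Prod.snd p.1
            (crep_eq (Coalgebra.comul (R := k) p.1))]
      rw [Finset.sum_congr rfl step, ← sum_tmul,
        rep_antipode_right (k := k) _ Prod.fst Prod.snd c hrep, ← smul_tmul',
        ← Algebra.TensorProduct.one_def]
    have final : ∑ p ∈ s, Coalgebra.comul (R := k) p.1 * ((TensorProduct.comm k H H)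
        ((TensorProduct.map (HopfAlgebra.antipode (R := k)) (HopfAlgebra.antipode (R := k)))
          (Coalgebra.comul (R := k) p.2))) = Coalgebra.counit (R := k) c • 1 := by
      rw [← calc1, hZ, calc2]
    exact final

end Hopf

end QPB

variable (k B H : Type) [Field k] [Ring B] [Algebra k B] [Ring H]
  [HopfAlgebra k H]

namespace QPB

section Comod

variable {N : Type} [AddCommGroup N] [Module k N]

/-- The left `H`-action `H ⊗ N → N` as a linear map. -/
def lHmap (W : BicovBimod k H N) : H ⊗[k] N →ₗ[k] N := TensorProduct.lift W.l

/-- The projection `γ ↦ S(γ₋₁)·γ₀` onto left-coinvariants. -/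
def Pmap (W : BicovBimod k H N) : N →ₗ[k] N :=
  (lHmap k H W).comp ((TensorProduct.map (HopfAlgebra.antipode (R := k))
    (LinearMap.id (R := k) (M := N))).comp W.lco)

/-- The map `γ ↦ γ₋₂ ⊗ S(γ₋₁)·γ₀`. -/
def Phi (W : BicovBimod k H N) : N →ₗ[k] H ⊗[k] N :=
  (TensorProduct.map (LinearMap.id (R := k) (M := H)) (Pmap k H W)).comp W.lco

lemma Pmap_rep (W : BicovBimod k H N) (n : N) {ι : Type} (s : Finset ι) (f : ι → H) (g : ι → N)
    (hrep : ∑ i ∈ s, f i ⊗ₜ[k] g i = W.lco n) :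
    Pmap k H W n = ∑ i ∈ s, W.l (HopfAlgebra.antipode (R := k) (f i)) (g i) := by
  have h2 := congrArg (fun z => (lHmap k H W) ((TensorProduct.map (HopfAlgebra.antipode (R := k))
    (LinearMap.id (R := k) (M := N))) z)) hrep
  simp only [map_sum, TensorProduct.map_tmul, LinearMap.id_coe, id_eq, lHmap, lift.tmul] at h2
  exact h2.symm

lemma Phi_rep (W : BicovBimod k H N) (n : N) {ι : Type} (s : Finset ι) (f : ι → H) (g : ι → N)
    (hrep : ∑ i ∈ s, f i ⊗ₜ[k] g i = W.lco n) :
    Phi k H W n = ∑ i ∈ s, f i ⊗ₜ[k] Pmap k H W (g i) := by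
  have h2 := congrArg (TensorProduct.map (LinearMap.id (R := k) (M := H)) (Pmap k H W)) hrep
  simp only [map_sum, TensorProduct.map_tmul, LinearMap.id_coe, id_eq] at h2
  exact h2.symm

lemma lco_lact_rep (W : BicovBimod k H N) (h : H) (n : N)
    {ι ι' : Type} (s : Finset ι) (f g : ι → H) (s' : Finset ι') (u : ι' → H) (v : ι' → N)
    (h1 : ∑ i ∈ s, f i ⊗ₜ[k] g i = Coalgebra.comul (R := k) h)
    (h2 : ∑ j ∈ s', u j ⊗ₜ[k] v j = W.lco n) :
    ∑ i ∈ s, ∑ j ∈ s', (f i * u j) ⊗ₜ[k] (W.l (g i) (v j)) = W.lco (W.l h n) := by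
  have h0 := LinearMap.congr_fun W.lco_lact (h ⊗ₜ[k] n)
  simp only [LinearMap.comp_apply, lift.tmul, TensorProduct.map_tmul,
    LinearEquiv.coe_coe] at h0
  rw [← h1, ← h2] at h0
  rw [sum_tmul] at h0
  simp only [map_sum, tmul_sum, tensorTensorTensorComm_tmul, TensorProduct.map_tmul,
    LinearMap.mul'_apply, lift.tmul] at h0
  exact h0.symm

lemma Pmap_lact (W : BicovBimod k H N) (h : H) (n : N) :
    Pmap k H W (W.l h n) = Coalgebra.counit (R := k) h • Pmap k H W n := by
  classical
  have hre : ∑ pq ∈ (crep (Coalgebra.comul (R := k) h)) ×ˢ (crep (W.lco n)),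
      (pq.1.1 * pq.2.1) ⊗ₜ[k] (W.l pq.1.2 pq.2.2) = W.lco (W.l h n) := by
    rw [Finset.sum_product]
    exact lco_lact_rep k H W h n _ _ _ _ _ _ (crep_eq _) (crep_eq _)
  rw [Pmap_rep k H W (W.l h n) _ _ _ hre, Finset.sum_product, Finset.sum_comm]
  have inner : ∀ q ∈ crep (W.lco n), ∑ p ∈ crep (Coalgebra.comul (R := k) h),
      W.l (HopfAlgebra.antipode (R := k) (p.1 * q.1)) (W.l p.2 q.2)
      = Coalgebra.counit (R := k) h •
        W.l (HopfAlgebra.antipode (R := k) q.1) q.2 := by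
    intro q _
    have term : ∀ p : H × H,
        W.l (HopfAlgebra.antipode (R := k) (p.1 * q.1)) (W.l p.2 q.2)
        = W.l (HopfAlgebra.antipode (R := k) q.1)
            (W.l (HopfAlgebra.antipode (R := k) p.1 * p.2) q.2) := by
      intro p
      rw [antipode_mul', W.mul_l]
      exact congrArg _ (W.mul_l _ _ _).symm
    rw [Finset.sum_congr rfl fun p _ => term p, ← map_sum]
    have hsum : ∑ p ∈ crep (Coalgebra.comul (R := k) h),
        W.l (HopfAlgebra.antipode (R := k) p.1 * p.2) q.2
        = Coalgebra.counit (R := k) h • q.2 := by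
      rw [← LinearMap.sum_apply, ← map_sum,
        rep_antipode_left (k := k) _ Prod.fst Prod.snd h (crep_eq _), map_smul,
        LinearMap.smul_apply, W.one_l]
    rw [hsum, map_smul]
  rw [Finset.sum_congr rfl inner, ← Finset.smul_sum,
    ← Pmap_rep k H W n _ _ _ (crep_eq _)]

lemma Phi_lact (W : BicovBimod k H N) (h : H) (n : N) :
    Phi k H W (W.l h n)
      = (LinearMap.rTensor N (LinearMap.mulLeft k h)) (Phi k H W n) := by
  classical
  have hre : ∑ pq ∈ (crep (Coalgebra.comul (R := k) h)) ×ˢ (crep (W.lco n)),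
      (pq.1.1 * pq.2.1) ⊗ₜ[k] (W.l pq.1.2 pq.2.2) = W.lco (W.l h n) := by
    rw [Finset.sum_product]
    exact lco_lact_rep k H W h n _ _ _ _ _ _ (crep_eq _) (crep_eq _)
  rw [Phi_rep k H W (W.l h n) _ _ _ hre, Finset.sum_product, Finset.sum_comm]
  rw [Phi_rep k H W n _ _ _ (crep_eq _), map_sum]
  refine Finset.sum_congr rfl fun q _ => ?_
  rw [LinearMap.rTensor_tmul, LinearMap.mulLeft_apply]
  have term : ∀ p : H × H, (p.1 * q.1) ⊗ₜ[k] Pmap k H W (W.l p.2 q.2)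
      = ((Coalgebra.counit (R := k) p.2 • p.1) * q.1) ⊗ₜ[k] Pmap k H W q.2 := by
    intro p
    rw [Pmap_lact k H W p.2 q.2, tmul_smul, smul_tmul', ← smul_mul_assoc]
  rw [Finset.sum_congr rfl fun p _ => term p, ← sum_tmul, ← Finset.sum_mul,
    rep_counit_right (k := k) _ Prod.fst Prod.snd h (crep_eq _)]

lemma comul_antipode_rep (x : H) :
    ∑ r ∈ crep (Coalgebra.comul (R := k) x),
      HopfAlgebra.antipode (R := k) r.2 ⊗ₜ[k] HopfAlgebra.antipode (R := k) r.1
      = Coalgebra.comul (R := k) (HopfAlgebra.antipode (R := k) x) := by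
  have h2 := congrArg (fun z => (TensorProduct.comm k H H)
    ((TensorProduct.map (HopfAlgebra.antipode (R := k)) (HopfAlgebra.antipode (R := k))) z))
    (crep_eq (Coalgebra.comul (R := k) x))
  simp only [map_sum, TensorProduct.map_tmul, LinearEquiv.coe_coe,
    TensorProduct.comm_tmul] at h2
  exact h2.trans (comul_antipode' x).symm

lemma Pmap_coinv (W : BicovBimod k H N) (n : N) :
    W.lco (Pmap k H W n) = (1 : H) ⊗ₜ[k] Pmap k H W n := by
  classical
  -- the two refinement maps on `H ⊗ N`
  set m1 : H ⊗[k] N →ₗ[k] H ⊗[k] (H ⊗[k] N) :=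
    TensorProduct.map (LinearMap.id (R := k) (M := H)) W.lco with hm1
  set m2 : H ⊗[k] N →ₗ[k] H ⊗[k] (H ⊗[k] N) :=
    (TensorProduct.assoc k H H N).toLinearMap.comp
      (TensorProduct.map (Coalgebra.comul (R := k)) (LinearMap.id (R := k) (M := N))) with hm2
  have hmm : ∀ m : N, m1 (W.lco m) = m2 (W.lco m) := by
    intro m
    simp only [hm1, hm2, LinearMap.comp_apply, LinearEquiv.coe_coe]
    exact (W.lco_coassoc m).symm
  -- E and its two expansions
  have hEa : ∑ q ∈ crep (W.lco n), q.1 ⊗ₜ[k] W.lco q.2 = m1 (W.lco n) := by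
    have h2 := congrArg m1 (crep_eq (W.lco n))
    simpa only [map_sum, hm1, TensorProduct.map_tmul, LinearMap.id_coe, id_eq] using h2
  have hEb : ∑ q ∈ crep (W.lco n),
      (TensorProduct.assoc k H H N) ((Coalgebra.comul (R := k) q.1) ⊗ₜ[k] q.2)
      = m1 (W.lco n) := by
    have h2 := congrArg m2 (crep_eq (W.lco n))
    simp only [map_sum, hm2, LinearMap.comp_apply, TensorProduct.map_tmul,
      LinearMap.id_coe, id_eq, LinearEquiv.coe_coe] at h2
    exact h2.trans (hmm n).symm
  -- the contraction map Θ'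
  set Th : H ⊗[k] (H ⊗[k] (H ⊗[k] N)) →ₗ[k] H ⊗[k] N :=
    (TensorProduct.map ((LinearMap.mul' k H).comp (TensorProduct.map
        (HopfAlgebra.antipode (R := k)) (LinearMap.id (R := k) (M := H))))
      ((lHmap k H W).comp (TensorProduct.map (HopfAlgebra.antipode (R := k))
        (LinearMap.id (R := k) (M := N))))).comp
      ((TensorProduct.tensorTensorTensorComm k H H H N).toLinearMap.comp
        ((TensorProduct.map (TensorProduct.comm k H H).toLinearMap
          (LinearMap.id (R := k) (M := H ⊗[k] N))).comp
          (TensorProduct.assoc k H H (H ⊗[k] N)).symm.toLinearMap)) with hTh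
  have Thapp : ∀ (x y z : H) (m : N), Th (x ⊗ₜ[k] (y ⊗ₜ[k] (z ⊗ₜ[k] m)))
      = (HopfAlgebra.antipode (R := k) y * z) ⊗ₜ[k]
        (W.l (HopfAlgebra.antipode (R := k) x) m) := by
    intro x y z m
    simp [hTh, assoc_symm_tmul, tensorTensorTensorComm_tmul, LinearMap.mul'_apply,
      lHmap, lift.tmul]
  -- Z1 = Z2
  have hZ : (TensorProduct.map (LinearMap.id (R := k) (M := H)) m1) (m1 (W.lco n))
      = (TensorProduct.map (LinearMap.id (R := k) (M := H)) m2) (m1 (W.lco n)) := by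
    rw [← hEa, map_sum, map_sum]
    refine Finset.sum_congr rfl fun q _ => ?_
    rw [TensorProduct.map_tmul, TensorProduct.map_tmul]
    exact congrArg _ (hmm q.2)
  -- computation of lco (Pmap n) as Θ' Z1
  have main1 : W.lco (Pmap k H W n) = Th ((TensorProduct.map (LinearMap.id (R := k) (M := H))
      m1) (m1 (W.lco n))) := by
    rw [Pmap_rep k H W n _ _ _ (crep_eq _), map_sum, ← hEb, map_sum, map_sum]
    refine Finset.sum_congr rfl fun q _ => ?_
    -- LHS: lco (l (S q1) q2); RHS: Th ((map id m1) (assoc (Δ q1 ⊗ q2)))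
    rw [← lco_lact_rep k H W (HopfAlgebra.antipode (R := k) q.1) q.2
      (crep (Coalgebra.comul (R := k) q.1))
      (fun r => HopfAlgebra.antipode (R := k) r.2)
      (fun r => HopfAlgebra.antipode (R := k) r.1)
      (crep (W.lco q.2)) Prod.fst Prod.snd (comul_antipode_rep k H q.1) (crep_eq _)]
    conv_rhs => rw [← crep_eq (Coalgebra.comul (R := k) q.1)]
    rw [sum_tmul, map_sum, map_sum, map_sum]
    refine Finset.sum_congr rfl fun r _ => ?_
    rw [assoc_tmul, TensorProduct.map_tmul]
    simp only [LinearMap.id_coe, id_eq, hm1, TensorProduct.map_tmul]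
    conv_rhs => rw [← crep_eq (W.lco q.2)]
    rw [tmul_sum, tmul_sum, map_sum]
    exact Finset.sum_congr rfl fun u _ => (Thapp r.1 r.2 u.1 u.2).symm
  -- computation of Θ' Z2
  have main2 : Th ((TensorProduct.map (LinearMap.id (R := k) (M := H)) m2) (m1 (W.lco n)))
      = (1 : H) ⊗ₜ[k] Pmap k H W n := by
    rw [← hEb, map_sum, map_sum]
    have step : ∀ q ∈ crep (W.lco n), Th ((TensorProduct.map (LinearMap.id (R := k) (M := H))
        m2) ((TensorProduct.assoc k H H N) ((Coalgebra.comul (R := k) q.1) ⊗ₜ[k] q.2)))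
        = (1 : H) ⊗ₜ[k] W.l (HopfAlgebra.antipode (R := k) q.1) q.2 := by
      intro q _
      conv_lhs => rw [← crep_eq (Coalgebra.comul (R := k) q.1)]
      rw [sum_tmul, map_sum, map_sum, map_sum]
      have term : ∀ r ∈ crep (Coalgebra.comul (R := k) q.1),
          Th ((TensorProduct.map (LinearMap.id (R := k) (M := H)) m2)
            ((TensorProduct.assoc k H H N) ((r.1 ⊗ₜ[k] r.2) ⊗ₜ[k] q.2)))
          = (1 : H) ⊗ₜ[k] W.l (HopfAlgebra.antipode (R := k)
              (Coalgebra.counit (R := k) r.2 • r.1)) q.2 := by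
        intro r _
        rw [assoc_tmul, TensorProduct.map_tmul]
        simp only [LinearMap.id_coe, id_eq, hm2, LinearMap.comp_apply,
          TensorProduct.map_tmul, LinearEquiv.coe_coe, assoc_tmul]
        conv_lhs => rw [← crep_eq (Coalgebra.comul (R := k) r.2)]
        rw [sum_tmul, map_sum, tmul_sum, map_sum]
        rw [Finset.sum_congr rfl fun v _ => Thapp r.1 v.1 v.2 q.2, ← sum_tmul,
          rep_antipode_left (k := k) _ Prod.fst Prod.snd r.2 (crep_eq _), ← smul_tmul',
          ← tmul_smul]
        congr 1
        rw [map_smul, map_smul, LinearMap.smul_apply]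
      rw [Finset.sum_congr rfl term, ← tmul_sum]
      congr 1
      rw [← LinearMap.sum_apply, ← map_sum, ← map_sum,
        rep_counit_right (k := k) _ Prod.fst Prod.snd q.1 (crep_eq _)]
    rw [Finset.sum_congr rfl step, ← tmul_sum, ← Pmap_rep k H W n _ _ _ (crep_eq _)]
  rw [main1, hZ, main2]

lemma lco_rep_a (W : BicovBimod k H N) (n : N) :
    ∑ q ∈ crep (W.lco n), q.1 ⊗ₜ[k] W.lco q.2
      = (TensorProduct.map (LinearMap.id (R := k) (M := H)) W.lco) (W.lco n) := by
  have h2 := congrArg (TensorProduct.map (LinearMap.id (R := k) (M := H)) W.lco)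
    (crep_eq (W.lco n))
  simpa only [map_sum, TensorProduct.map_tmul, LinearMap.id_coe, id_eq] using h2

lemma lco_rep_b (W : BicovBimod k H N) (n : N) :
    ∑ q ∈ crep (W.lco n),
      (TensorProduct.assoc k H H N) ((Coalgebra.comul (R := k) q.1) ⊗ₜ[k] q.2)
      = (TensorProduct.map (LinearMap.id (R := k) (M := H)) W.lco) (W.lco n) := by
  have h2 := congrArg (fun z => (TensorProduct.assoc k H H N)
    ((TensorProduct.map (Coalgebra.comul (R := k)) (LinearMap.id (R := k) (M := N))) z))
    (crep_eq (W.lco n))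
  simp only [map_sum, TensorProduct.map_tmul, LinearMap.id_coe, id_eq,
    LinearEquiv.coe_coe] at h2
  refine h2.trans ?_
  exact W.lco_coassoc n

lemma lH_Phi (W : BicovBimod k H N) (n : N) :
    lHmap k H W (Phi k H W n) = n := by
  classical
  set Xi : H ⊗[k] (H ⊗[k] N) →ₗ[k] N :=
    (lHmap k H W).comp ((TensorProduct.map ((LinearMap.mul' k H).comp
      (TensorProduct.map (LinearMap.id (R := k) (M := H)) (HopfAlgebra.antipode (R := k))))
      (LinearMap.id (R := k) (M := N))).comp
      (TensorProduct.assoc k H H N).symm.toLinearMap) with hXi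
  have Xiapp : ∀ (x y : H) (m : N), Xi (x ⊗ₜ[k] (y ⊗ₜ[k] m))
      = W.l (x * HopfAlgebra.antipode (R := k) y) m := by
    intro x y m
    simp [hXi, assoc_symm_tmul, LinearMap.mul'_apply, lHmap, lift.tmul]
  have main1 : lHmap k H W (Phi k H W n)
      = Xi (∑ q ∈ crep (W.lco n), q.1 ⊗ₜ[k] W.lco q.2) := by
    rw [Phi_rep k H W n _ _ _ (crep_eq _), map_sum, map_sum]
    refine Finset.sum_congr rfl fun q _ => ?_
    have lhs : lHmap k H W (q.1 ⊗ₜ[k] Pmap k H W q.2)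
        = ∑ u ∈ crep (W.lco q.2), W.l (q.1 * HopfAlgebra.antipode (R := k) u.1) u.2 := by
      rw [Pmap_rep k H W q.2 _ _ _ (crep_eq _)]
      simp only [lHmap, lift.tmul]
      rw [map_sum]
      exact Finset.sum_congr rfl fun u _ => (W.mul_l _ _ _).symm
    rw [lhs]
    conv_rhs => rw [← crep_eq (W.lco q.2)]
    rw [tmul_sum, map_sum]
    exact Finset.sum_congr rfl fun u _ => (Xiapp q.1 u.1 u.2).symm
  have main2 : Xi (∑ q ∈ crep (W.lco n), q.1 ⊗ₜ[k] W.lco q.2) = n := by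
    rw [lco_rep_a k H W n, ← lco_rep_b k H W n, map_sum]
    have step : ∀ q ∈ crep (W.lco n),
        Xi ((TensorProduct.assoc k H H N) ((Coalgebra.comul (R := k) q.1) ⊗ₜ[k] q.2))
        = Coalgebra.counit (R := k) q.1 • q.2 := by
      intro q _
      conv_lhs => rw [← crep_eq (Coalgebra.comul (R := k) q.1)]
      rw [sum_tmul, map_sum, map_sum]
      rw [Finset.sum_congr rfl fun r _ => congrArg Xi (assoc_tmul r.1 r.2 q.2),
        Finset.sum_congr rfl fun r _ => Xiapp r.1 r.2 q.2]
      rw [← LinearMap.sum_apply, ← map_sum,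
        rep_antipode_right (k := k) _ Prod.fst Prod.snd q.1 (crep_eq _), map_smul,
        LinearMap.smul_apply, W.one_l]
    rw [Finset.sum_congr rfl step]
    have h2 := congrArg (fun z => (TensorProduct.lid k N)
      ((TensorProduct.map (Coalgebra.counit (R := k)) (LinearMap.id (R := k) (M := N))) z))
      (crep_eq (W.lco n))
    simp only [map_sum, TensorProduct.map_tmul, LinearMap.id_coe, id_eq, lid_tmul] at h2
    exact h2.trans (W.lco_counit n)
  rw [main1, main2]

/-- The vertical map on the `B ⊗ N` part. -/
def Vmap (W : BicovBimod k H N) : B ⊗[k] N →ₗ[k] (B ⊗[k] H) ⊗[k] N :=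
  (TensorProduct.assoc k B H N).symm.toLinearMap.comp
    (TensorProduct.map (LinearMap.id (R := k) (M := B)) (Phi k H W))

/-- The retraction of the vertical map. -/
def Rmap (W : BicovBimod k H N) : (B ⊗[k] H) ⊗[k] N →ₗ[k] B ⊗[k] N :=
  (TensorProduct.map (LinearMap.id (R := k) (M := B)) (lHmap k H W)).comp
    (TensorProduct.assoc k B H N).toLinearMap

lemma Vmap_rep (W : BicovBimod k H N) (b : B) (γ : N) {ι : Type} (s : Finset ι)
    (f : ι → H) (g : ι → N) (hrep : ∑ i ∈ s, f i ⊗ₜ[k] g i = W.lco γ) :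
    Vmap k B H W (b ⊗ₜ[k] γ) = ∑ i ∈ s, (b ⊗ₜ[k] f i) ⊗ₜ[k] Pmap k H W (g i) := by
  simp only [Vmap, LinearMap.comp_apply, TensorProduct.map_tmul, LinearMap.id_coe, id_eq,
    LinearEquiv.coe_coe]
  rw [Phi_rep k H W γ _ _ _ hrep, tmul_sum, map_sum]
  exact Finset.sum_congr rfl fun i _ => by rw [assoc_symm_tmul]

lemma Rmap_tmul (W : BicovBimod k H N) (b : B) (h : H) (m : N) :
    Rmap k B H W ((b ⊗ₜ[k] h) ⊗ₜ[k] m) = b ⊗ₜ[k] W.l h m := by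
  simp [Rmap, assoc_tmul, lHmap, lift.tmul]

lemma Rmap_Vmap (W : BicovBimod k H N) (y : B ⊗[k] N) :
    Rmap k B H W (Vmap k B H W y) = y := by
  induction y using TensorProduct.induction_on with
  | zero => simp
  | add z z' hz hz' => rw [map_add, map_add, hz, hz']
  | tmul b γ =>
    rw [Vmap_rep k B H W b γ _ _ _ (crep_eq _), map_sum]
    rw [Finset.sum_congr rfl fun q _ => Rmap_tmul k B H W b q.1 (Pmap k H W q.2), ← tmul_sum]
    congr 1
    have h2 : ∑ q ∈ crep (W.lco γ), W.l q.1 (Pmap k H W q.2)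
        = lHmap k H W (Phi k H W γ) := by
      rw [Phi_rep k H W γ _ _ _ (crep_eq _), map_sum]
      exact Finset.sum_congr rfl fun q _ => by simp [lHmap, lift.tmul]
    rw [h2, lH_Phi]

lemma Pmap_coinvariant (W : BicovBimod k H N) (γ : N)
    (hγ : W.lco γ = (1 : H) ⊗ₜ[k] γ) : Pmap k H W γ = γ := by
  classical
  have hrep : ∑ i ∈ ({((1 : H), γ)} : Finset (H × N)), i.1 ⊗ₜ[k] i.2 = W.lco γ := by
    rw [Finset.sum_singleton, hγ]
  rw [Pmap_rep k H W γ _ _ _ hrep, Finset.sum_singleton, antipode_one', W.one_l]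

lemma Phi_coinvariant (W : BicovBimod k H N) (γ : N)
    (hγ : W.lco γ = (1 : H) ⊗ₜ[k] γ) : Phi k H W γ = (1 : H) ⊗ₜ[k] γ := by
  classical
  have hrep : ∑ i ∈ ({((1 : H), γ)} : Finset (H × N)), i.1 ⊗ₜ[k] i.2 = W.lco γ := by
    rw [Finset.sum_singleton, hγ]
  rw [Phi_rep k H W γ _ _ _ hrep, Finset.sum_singleton, Pmap_coinvariant k H W γ hγ]

lemma Vmap_tmul_coinv (W : BicovBimod k H N) (b : B) (h : H) (γ : N)
    (hγ : W.lco γ = (1 : H) ⊗ₜ[k] γ) :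
    Vmap k B H W (b ⊗ₜ[k] W.l h γ) = (b ⊗ₜ[k] h) ⊗ₜ[k] γ := by
  simp only [Vmap, LinearMap.comp_apply, TensorProduct.map_tmul, LinearMap.id_coe, id_eq,
    LinearEquiv.coe_coe]
  rw [Phi_lact k H W h γ, Phi_coinvariant k H W γ hγ, LinearMap.rTensor_tmul,
    LinearMap.mulLeft_apply, mul_one, assoc_symm_tmul]

end Comod

end QPB

set_option maxHeartbeats 2000000 in
/-- For the crossed product calculus on `B #_σ H`, the vertical map
`ver : Ω¹(B#_σH) → (B#_σH) ⊗ ^{coH}Ω¹(H)`, `β ⊗ h + b ⊗ γ ↦ b ⊗ γ₋₂ ⊗ S(γ₋₁)γ₀`, is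
left `B#_σH`-linear, takes values in the left coinvariant 1-forms, and is surjective onto
them with kernel exactly `Ω¹(B) ⊗ H`; this yields the exact Atiyah sequence
`0 → Ω¹(B) ⊗ H → Ω¹(B#_σH) → (B#_σH) ⊗ ^{coH}Ω¹(H) → 0` and hence a quantum
principal bundle. -/
theorem crossed_product_vertical_map_exact
    (T : TwistedSystem k B H) (m : (B ⊗[k] H) →ₗ[k] (B ⊗[k] H) →ₗ[k] (B ⊗[k] H))
    (hm : IsCrossedMul k B H T m)
    (M N : Type) [AddCommGroup M] [Module k M] [AddCommGroup N] [Module k N]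
    (F : FODCData k B M) (hact : H →ₗ[k] M →ₗ[k] M)
    (h_comp : ∀ (ι : Type) (s : Finset ι) (f g : ι → H) (h : H),
      Rep2 k (Coalgebra.comul (R := k)) s f g h → ∀ b b' : B,
        hact h (F.l b (F.d b')) = ∑ i ∈ s, F.l (T.act (f i) b) (hact (g i) (F.d b')))
    (h_lin : ∀ (h : H) (b : B), F.d (T.act h b) = hact h (F.d b))
    (h_dσ : ∀ h h' : H, F.d (T.coc h h') = 0)
    (W : BicovFODC k H N)
    (L : (B ⊗[k] H) →ₗ[k] ((M ⊗[k] H) × (B ⊗[k] N)) →ₗ[k] ((M ⊗[k] H) × (B ⊗[k] N)))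
    (hL : IsCrossedLeftAct k B H T F.toBimodData hact W.toBicovBimod L)
    -- the vertical map:
    (ver : ((M ⊗[k] H) × (B ⊗[k] N)) →ₗ[k] (B ⊗[k] H) ⊗[k] N)
    (hver₁ : ∀ (β : M) (h : H), ver (β ⊗ₜ[k] h, 0) = 0)
    (hver₂ : ∀ (b : B) (γ : N) (ι : Type) (s : Finset ι)
        (e₁ e₂ : ι → H) (e₃ : ι → N),
      Rep3 k (Λ₂ k H W.toBicovBimod) s e₁ e₂ e₃ γ →
        ver (0, b ⊗ₜ[k] γ) = ∑ i ∈ s,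
          (b ⊗ₜ[k] e₁ i) ⊗ₜ[k] (W.l (HopfAlgebra.antipode (R := k) (e₂ i)) (e₃ i))) :
    -- `ver` is left `B#_σH`-linear, …
    (∀ (x : B ⊗[k] H) (c : (M ⊗[k] H) × (B ⊗[k] N)) (ι : Type) (s : Finset ι)
        (w : ι → B ⊗[k] H) (n : ι → N),
      Rep2 k ver s w n c → ver (L x c) = ∑ i ∈ s, (m x (w i)) ⊗ₜ[k] n i) ∧
    -- … takes values in `(B#_σH) ⊗ ^{coH}Ω¹(H)`, …
    (∀ c : (M ⊗[k] H) × (B ⊗[k] N),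
      ver c ∈ LinearMap.range (TensorProduct.map (LinearMap.id (R := k) (M := B ⊗[k] H))
        (LinearMap.ker (W.lco - (TensorProduct.mk k H N) 1)).subtype)) ∧
    -- … its kernel is exactly the horizontal forms `Ω¹(B) ⊗ H`, …
    (∀ c : (M ⊗[k] H) × (B ⊗[k] N), ver c = 0 ↔ c.2 = 0) ∧
    -- … and it is surjective onto `(B#_σH) ⊗ ^{coH}Ω¹(H)`:
    (∀ w : (B ⊗[k] H) ⊗[k] N,
      w ∈ LinearMap.range (TensorProduct.map (LinearMap.id (R := k) (M := B ⊗[k] H))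
        (LinearMap.ker (W.lco - (TensorProduct.mk k H N) 1)).subtype) →
      ∃ c : (M ⊗[k] H) × (B ⊗[k] N), ver c = w) := by
  classical
  -- ver vanishes on the first component
  have A1 : ∀ z : M ⊗[k] H, ver (z, 0) = 0 := by
    intro z
    have h0 : (ver.comp (LinearMap.inl k (M ⊗[k] H) (B ⊗[k] N))) = 0 := by
      apply TensorProduct.ext'
      intro β h
      simpa using hver₁ β h
    simpa using LinearMap.congr_fun h0 z
  -- ver on the second component is the canonical vertical map
  have A2 : ∀ y : B ⊗[k] N, ver (0, y) = QPB.Vmap k B H W.toBicovBimod y := by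
    intro y
    have h0 : (ver.comp (LinearMap.inr k (M ⊗[k] H) (B ⊗[k] N)))
        = QPB.Vmap k B H W.toBicovBimod := by
      apply TensorProduct.ext'
      intro b γ
      obtain ⟨ι, s, e₁, e₂, e₃, h3⟩ := QPB.exists_rep3 (Λ₂ k H W.toBicovBimod γ)
      have hv := hver₂ b γ ι s e₁ e₂ e₃ h3
      simp only [LinearMap.comp_apply, LinearMap.inr_apply]
      rw [hv]
      have hPhi : QPB.Phi k H W.toBicovBimod γ = ∑ i ∈ s, e₁ i ⊗ₜ[k]
          W.l (HopfAlgebra.antipode (R := k) (e₂ i)) (e₃ i) := by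
        have h4 := congrArg (TensorProduct.map (LinearMap.id (R := k) (M := H))
          ((QPB.lHmap k H W.toBicovBimod).comp (TensorProduct.map
            (HopfAlgebra.antipode (R := k)) (LinearMap.id (R := k) (M := N))))) h3
        simp only [map_sum, TensorProduct.map_tmul, LinearMap.id_coe, id_eq,
          LinearMap.comp_apply, QPB.lHmap, lift.tmul] at h4
        refine Eq.trans ?_ h4.symm
        have hL2 : Λ₂ k H W.toBicovBimod γ
            = (TensorProduct.map (LinearMap.id (R := k) (M := H)) W.lco) (W.lco γ) := by
          simp only [Λ₂, LinearMap.comp_apply, LinearEquiv.coe_coe]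
          exact W.lco_coassoc γ
        have hfac : QPB.Phi k H W.toBicovBimod γ
            = (TensorProduct.map (LinearMap.id (R := k) (M := H))
                ((QPB.lHmap k H W.toBicovBimod).comp (TensorProduct.map
                  (HopfAlgebra.antipode (R := k)) (LinearMap.id (R := k) (M := N)))))
              ((TensorProduct.map (LinearMap.id (R := k) (M := H)) W.lco) (W.lco γ)) := by
          rw [← LinearMap.comp_apply, ← TensorProduct.map_comp]
          rfl
        rw [hfac]
        exact congrArg _ hL2.symm
      rw [QPB.Vmap, LinearMap.comp_apply, TensorProduct.map_tmul, hPhi]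
      simp only [LinearMap.id_coe, id_eq, LinearEquiv.coe_coe]
      rw [tmul_sum, map_sum]
      exact Finset.sum_congr rfl fun i _ => by rw [assoc_symm_tmul]
    simpa using LinearMap.congr_fun h0 y
  have A3 : ∀ c : (M ⊗[k] H) × (B ⊗[k] N), ver c = QPB.Vmap k B H W.toBicovBimod c.2 := by
    intro c
    have hc : ((c.1, 0) : (M ⊗[k] H) × (B ⊗[k] N)) + (0, c.2) = c := by simp
    have h0 := congrArg ver hc
    rw [map_add, A1, A2, zero_add] at h0
    exact h0.symm
  refine ⟨?_, ?_, ?_, ?_⟩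
  · -- left linearity
    have lin : ∀ (x : B ⊗[k] H) (c : (M ⊗[k] H) × (B ⊗[k] N)),
        ver (L x c) = (LinearMap.rTensor N (m x)) (ver c) := by
      intro x
      induction x using TensorProduct.induction_on with
      | zero =>
        intro c
        rw [map_zero, LinearMap.zero_apply, map_zero, map_zero, LinearMap.rTensor_zero,
          LinearMap.zero_apply]
      | add x x' hx hx' =>
        intro c
        rw [map_add, LinearMap.add_apply, map_add, hx, hx', map_add, LinearMap.rTensor_add,
          LinearMap.add_apply]
      | tmul b' h' =>
        obtain ⟨ι, s, f₁, f₂, f₃, h3⟩ := QPB.exists_rep3 (Δ₂ k H h')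
        have case1 : ∀ z : M ⊗[k] H, ver (L (b' ⊗ₜ[k] h') (z, 0)) = 0 := by
          intro z
          have hz : (L (b' ⊗ₜ[k] h') (z, 0)).2 = 0 := by
            induction z using TensorProduct.induction_on with
            | zero =>
              show (L (b' ⊗ₜ[k] h') 0).2 = 0
              rw [map_zero]; rfl
            | add z z' h1 h2 =>
              have : ((z + z', 0) : (M ⊗[k] H) × (B ⊗[k] N)) = (z, 0) + (z', 0) := by simp
              rw [this, map_add]
              change (L (b' ⊗ₜ[k] h') (z, 0)).2 + (L (b' ⊗ₜ[k] h') (z', 0)).2 = 0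
              rw [h1, h2, add_zero]
            | tmul β h =>
              rw [hL.1 b' h' β h ι (H × H) s (QPB.crep (Coalgebra.comul (R := k) h))
                f₁ f₂ f₃ Prod.fst Prod.snd h3 (QPB.crep_eq _)]
          rw [A3, hz, map_zero]
        have case2 : ∀ y : B ⊗[k] N, ver (L (b' ⊗ₜ[k] h') (0, y))
            = (LinearMap.rTensor N (m (b' ⊗ₜ[k] h'))) (ver (0, y)) := by
          intro y
          induction y using TensorProduct.induction_on with
          | zero =>
            show ver (L (b' ⊗ₜ[k] h') 0) = (LinearMap.rTensor N (m (b' ⊗ₜ[k] h'))) (ver 0)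
            simp
          | add y y' h1 h2 =>
            have : ((0, y + y') : (M ⊗[k] H) × (B ⊗[k] N)) = (0, y) + (0, y') := by simp
            rw [this, map_add, map_add, map_add, map_add, h1, h2]
          | tmul b γ =>
            rw [hL.2 b' h' b γ ι (H × N) s (QPB.crep (W.lco γ)) f₁ f₂ f₃
              Prod.fst Prod.snd h3 (QPB.crep_eq _)]
            rw [A2, A2]
            set Psi : ι → (H ⊗[k] (H ⊗[k] N) →ₗ[k] (B ⊗[k] H) ⊗[k] N) := fun i =>
              (TensorProduct.map (TensorProduct.map
                  ((LinearMap.mulLeft k (b' * T.act (f₁ i) b)).comp (T.coc (f₂ i)))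
                  (LinearMap.mulLeft k (f₃ i)))
                (QPB.Pmap k H W.toBicovBimod)).comp
                (TensorProduct.assoc k H H N).symm.toLinearMap with hPsi
            have Psiapp : ∀ (i : ι) (x y : H) (n : N), Psi i (x ⊗ₜ[k] (y ⊗ₜ[k] n))
                = ((b' * T.act (f₁ i) b * T.coc (f₂ i) x) ⊗ₜ[k] (f₃ i * y)) ⊗ₜ[k]
                  QPB.Pmap k H W.toBicovBimod n := by
              intro i x y n
              simp [hPsi, assoc_symm_tmul, mul_assoc]
            have lhs_term : ∀ (i : ι) (j : H × N),
                QPB.Vmap k B H W.toBicovBimod ((b' * T.act (f₁ i) b * T.coc (f₂ i) j.1)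
                  ⊗ₜ[k] W.l (f₃ i) j.2) = Psi i (j.1 ⊗ₜ[k] W.lco j.2) := by
              intro i j
              simp only [QPB.Vmap, LinearMap.comp_apply, TensorProduct.map_tmul,
                LinearMap.id_coe, id_eq, LinearEquiv.coe_coe]
              rw [QPB.Phi_lact k H W.toBicovBimod (f₃ i) j.2,
                QPB.Phi_rep k H W.toBicovBimod j.2 _ _ _ (QPB.crep_eq _)]
              rw [map_sum, tmul_sum, map_sum]
              conv_rhs => rw [← QPB.crep_eq (W.lco j.2)]
              rw [tmul_sum, map_sum]
              refine Finset.sum_congr rfl fun v _ => ?_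
              rw [LinearMap.rTensor_tmul, LinearMap.mulLeft_apply, assoc_symm_tmul,
                Psiapp i j.1 v.1 v.2]
            have hmj : ∀ j : H × N, (m (b' ⊗ₜ[k] h')) (b ⊗ₜ[k] j.1)
                = ∑ i ∈ s, ∑ u ∈ QPB.crep (Coalgebra.comul (R := k) j.1),
                  (b' * T.act (f₁ i) b * T.coc (f₂ i) u.1) ⊗ₜ[k] (f₃ i * u.2) := by
              intro j
              exact hm ι (H × H) s (QPB.crep _) f₁ f₂ f₃ Prod.fst Prod.snd h' j.1 h3
                (QPB.crep_eq _) b' b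
            have rhs_term : ∀ j : H × N, (LinearMap.rTensor N (m (b' ⊗ₜ[k] h')))
                ((b ⊗ₜ[k] j.1) ⊗ₜ[k] QPB.Pmap k H W.toBicovBimod j.2)
                = ∑ i ∈ s, Psi i ((TensorProduct.assoc k H H N)
                    ((Coalgebra.comul (R := k) j.1) ⊗ₜ[k] j.2)) := by
              intro j
              rw [LinearMap.rTensor_tmul, hmj j, sum_tmul]
              refine Finset.sum_congr rfl fun i _ => ?_
              rw [sum_tmul]
              conv_rhs => rw [← QPB.crep_eq (Coalgebra.comul (R := k) j.1)]
              rw [sum_tmul, map_sum, map_sum]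
              refine Finset.sum_congr rfl fun u _ => ?_
              rw [assoc_tmul, Psiapp i u.1 u.2 j.2]
            conv_rhs => rw [QPB.Vmap_rep k B H W.toBicovBimod b γ _ _ _ (QPB.crep_eq _),
              map_sum, Finset.sum_congr rfl fun j _ => rhs_term j, Finset.sum_comm]
            conv_lhs => rw [map_sum]
            refine Finset.sum_congr rfl fun i _ => ?_
            rw [map_sum, Finset.sum_congr rfl fun j _ => lhs_term i j, ← map_sum,
              QPB.lco_rep_a, ← map_sum, QPB.lco_rep_b]
        intro c
        have hc : ((c.1, 0) : (M ⊗[k] H) × (B ⊗[k] N)) + (0, c.2) = c := by simp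
        have hle := congrArg (fun z => ver (L (b' ⊗ₜ[k] h') z)) hc
        simp only [map_add] at hle
        rw [← hle, case1, zero_add, case2]
        rw [A3 c, ← A2]
    intro x c ι s w n hrep
    have hrep' : ∑ i ∈ s, w i ⊗ₜ[k] n i = ver c := hrep
    rw [lin x c, ← hrep', map_sum]
    exact Finset.sum_congr rfl fun i _ => by rw [LinearMap.rTensor_tmul]
  · -- values in coinvariants
    intro c
    rw [A3 c]
    generalize c.2 = y
    induction y using TensorProduct.induction_on with
    | zero => rw [map_zero]; exact Submodule.zero_mem _
    | add y y' h1 h2 => rw [map_add]; exact Submodule.add_mem _ h1 h2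
    | tmul b γ =>
      rw [QPB.Vmap_rep k B H W.toBicovBimod b γ _ _ _ (QPB.crep_eq _)]
      refine Submodule.sum_mem _ fun q _ => ?_
      refine ⟨(b ⊗ₜ[k] q.1) ⊗ₜ[k] ⟨QPB.Pmap k H W.toBicovBimod q.2, ?_⟩, ?_⟩
      · rw [LinearMap.mem_ker, LinearMap.sub_apply,
          QPB.Pmap_coinv k H W.toBicovBimod q.2]
        simp [TensorProduct.mk_apply]
      · rw [TensorProduct.map_tmul]
        rfl
  · -- kernel
    intro c
    constructor
    · intro h0
      rw [A3 c] at h0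
      have h1 := congrArg (QPB.Rmap k B H W.toBicovBimod) h0
      rwa [QPB.Rmap_Vmap, map_zero] at h1
    · intro h0
      rw [A3 c, h0, map_zero]
  · -- surjectivity
    have key : ∀ z : (B ⊗[k] H) ⊗[k] (LinearMap.ker (W.lco - (TensorProduct.mk k H N) 1)),
        QPB.Vmap k B H W.toBicovBimod (QPB.Rmap k B H W.toBicovBimod
          ((TensorProduct.map (LinearMap.id (R := k) (M := B ⊗[k] H))
            (LinearMap.ker (W.lco - (TensorProduct.mk k H N) 1)).subtype) z))
        = (TensorProduct.map (LinearMap.id (R := k) (M := B ⊗[k] H))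
            (LinearMap.ker (W.lco - (TensorProduct.mk k H N) 1)).subtype) z := by
      intro z
      induction z using TensorProduct.induction_on with
      | zero => rw [map_zero, map_zero, map_zero]
      | add z z' h1 h2 => rw [map_add, map_add, map_add, h1, h2]
      | tmul x κ =>
        induction x using TensorProduct.induction_on with
        | zero => rw [TensorProduct.zero_tmul, map_zero, map_zero, map_zero]
        | add x x' hx hx' => rw [TensorProduct.add_tmul, map_add, map_add, map_add, hx, hx']
        | tmul b h =>
          rw [TensorProduct.map_tmul]
          have hκ : W.lco κ.1 = (1 : H) ⊗ₜ[k] κ.1 := by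
            have h1 := LinearMap.mem_ker.mp κ.2
            rw [LinearMap.sub_apply, sub_eq_zero] at h1
            exact h1
          simp only [LinearMap.id_coe, id_eq, Submodule.coe_subtype]
          rw [QPB.Rmap_tmul, QPB.Vmap_tmul_coinv k B H W.toBicovBimod b h κ.1 hκ]
    rintro w ⟨z, rfl⟩
    exact ⟨(0, QPB.Rmap k B H W.toBicovBimod
      ((TensorProduct.map (LinearMap.id (R := k) (M := B ⊗[k] H))
        (LinearMap.ker (W.lco - (TensorProduct.mk k H N) 1)).subtype) z)),
      (A2 _).trans (key z)⟩


end
end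

section
/- Let V be a right H-comodule and E := ((B#_σH)⊗V)^{coH} the associated bundle with B-bimodule structure induced by multiplication in B#_σH. Then ∇_E: E → Ω¹(B)⊗_B E, b⊗h⊗v ↦ d_B b⊗h⊗v, is a covariant derivative, and it is a bimodule covariant derivative with σ_E: E⊗_B Ω¹(B) → Ω¹(B)⊗_B E given by σ_E(b⊗h⊗v⊗_B β) = b(h₁·β)⊗h₂⊗v; i.e. σ_E is a B-bimodule map and ∇_E(e·b') = σ_E(e⊗_B d_B b') + (∇_E e)·b'. -/
open TensorProduct

noncomputable section

variable (k B H : Type) [Field k] [Ring B] [Algebra k B] [Ring H]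
  [HopfAlgebra k H]

namespace Helper

variable {k : Type} [Field k]
variable {P Q W : Type} [AddCommMonoid P] [Module k P] [AddCommMonoid Q] [Module k Q]
  [AddCommMonoid W] [Module k W]

lemma rep_lift {ι : Type} {s : Finset ι} {f : ι → P} {g : ι → Q}
    {x : P ⊗[k] Q} (hx : ∑ i ∈ s, f i ⊗ₜ[k] g i = x) (F : P →ₗ[k] Q →ₗ[k] W) :
    ∑ i ∈ s, F (f i) (g i) = TensorProduct.lift F x := by
  rw [← hx, map_sum]; simp

variable {H : Type} [Ring H] [HopfAlgebra k H]

/-- lift of a trilinear map on `(H ⊗ H) ⊗ H`. -/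
def liftL (G : H →ₗ[k] H →ₗ[k] H →ₗ[k] W) : (H ⊗[k] H) ⊗[k] H →ₗ[k] W :=
  TensorProduct.lift (TensorProduct.lift G)

/-- lift of a trilinear map on `H ⊗ (H ⊗ H)`. -/
def liftR (G : H →ₗ[k] H →ₗ[k] H →ₗ[k] W) : H ⊗[k] (H ⊗[k] H) →ₗ[k] W :=
  TensorProduct.lift ((TensorProduct.lift.equiv (RingHom.id k) H H W).toLinearMap ∘ₗ G)

@[simp] lemma liftL_tmul (G : H →ₗ[k] H →ₗ[k] H →ₗ[k] W) (x y z : H) :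
    liftL G ((x ⊗ₜ[k] y) ⊗ₜ[k] z) = G x y z := by simp [liftL]

@[simp] lemma liftR_tmul (G : H →ₗ[k] H →ₗ[k] H →ₗ[k] W) (x y z : H) :
    liftR G (x ⊗ₜ[k] (y ⊗ₜ[k] z)) = G x y z := by simp [liftR]

lemma liftR_tmul' (G : H →ₗ[k] H →ₗ[k] H →ₗ[k] W) (x : H) (t : H ⊗[k] H) :
    liftR G (x ⊗ₜ[k] t) = TensorProduct.lift (G x) t 
    := by
  induction t with
  | zero => simp
  | tmul y z => simp
  | add a b ha hb => simp only [tmul_add, map_add, ha, hb]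

lemma coassoc_lift (G : H →ₗ[k] H →ₗ[k] H →ₗ[k] W) (x : H) :
    liftL G ((Coalgebra.comul (R := k)).rTensor H (Coalgebra.comul x))
      = liftR G ((Coalgebra.comul (R := k)).lTensor H (Coalgebra.comul x)) := by
  rw [← Coalgebra.coassoc_apply]
  have h : liftR (k := k) G ∘ₗ (TensorProduct.assoc k H H H).toLinearMap = liftL G := by
    apply TensorProduct.ext_threefold
    intro a b c; simp
  exact (LinearMap.congr_fun h _).symm


lemma sum_nest_left (G : H →ₗ[k] H →ₗ[k] H →ₗ[k] W) {ι ι' : Type} {s : Finset ι}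
    {g₁ g₂ : ι → H} {x : H}
    (hs : ∑ i ∈ s, g₁ i ⊗ₜ[k] g₂ i = Coalgebra.comul (R := k) x)
    {t : ι → Finset ι'} {u w : ι → ι' → H}
    (ht : ∀ i ∈ s, ∑ j ∈ t i, u i j ⊗ₜ[k] w i j = Coalgebra.comul (R := k) (g₁ i)) :
    ∑ i ∈ s, ∑ j ∈ t i, G (u i j) (w i j) (g₂ i)
      = liftL G ((Coalgebra.comul (R := k)).rTensor H (Coalgebra.comul (R := k) x)) := by
  rw [← hs, map_sum, map_sum]
  refine Finset.sum_congr rfl fun i hi => ?_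
  rw [LinearMap.rTensor_tmul, ← ht i hi, sum_tmul, map_sum]
  simp

lemma sum_nest_right (G : H →ₗ[k] H →ₗ[k] H →ₗ[k] W) {ι ι' : Type} {s : Finset ι}
    {g₁ g₂ : ι → H} {x : H}
    (hs : ∑ i ∈ s, g₁ i ⊗ₜ[k] g₂ i = Coalgebra.comul (R := k) x)
    {t : ι → Finset ι'} {p q : ι → ι' → H}
    (ht : ∀ i ∈ s, ∑ j ∈ t i, p i j ⊗ₜ[k] q i j = Coalgebra.comul (R := k) (g₂ i)) :
    ∑ i ∈ s, ∑ j ∈ t i, G (g₁ i) (p i j) (q i j)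
      = liftR G ((Coalgebra.comul (R := k)).lTensor H (Coalgebra.comul (R := k) x)) := by
  rw [← hs, map_sum, map_sum]
  refine Finset.sum_congr rfl fun i hi => ?_
  rw [LinearMap.lTensor_tmul, ← ht i hi, tmul_sum, map_sum]
  simp

/-- Coassociativity for Sweedler sums: splitting the first leg equals splitting
the second leg. -/
lemma coassoc_sum (G : H →ₗ[k] H →ₗ[k] H →ₗ[k] W) {ι ι' ι'' : Type} {s : Finset ι}
    {g₁ g₂ : ι → H} {x : H}
    (hs : ∑ i ∈ s, g₁ i ⊗ₜ[k] g₂ i = Coalgebra.comul (R := k) x)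
    {t : ι → Finset ι'} {u w : ι → ι' → H}
    (ht : ∀ i ∈ s, ∑ j ∈ t i, u i j ⊗ₜ[k] w i j = Coalgebra.comul (R := k) (g₁ i))
    {t' : ι → Finset ι''} {p q : ι → ι'' → H}
    (ht' : ∀ i ∈ s, ∑ j ∈ t' i, p i j ⊗ₜ[k] q i j = Coalgebra.comul (R := k) (g₂ i)) :
    ∑ i ∈ s, ∑ j ∈ t i, G (u i j) (w i j) (g₂ i)
      = ∑ i ∈ s, ∑ j ∈ t' i, G (g₁ i) (p i j) (q i j) := by
  rw [sum_nest_left G hs ht, sum_nest_right G hs ht', coassoc_lift]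

/-- A canonical finite presentation of any comultiplication value. -/
def rep (z : H ⊗[k] H) : Finset (H × H) := (TensorProduct.exists_finset z).choose

lemma rep_spec (z : H ⊗[k] H) : ∑ i ∈ rep z, i.1 ⊗ₜ[k] i.2 = z :=
  (TensorProduct.exists_finset z).choose_spec.symm

lemma equiv_lift {P Q : Type} [AddCommMonoid P] [Module k P] [AddCommMonoid Q] [Module k Q]
    (f : P →ₗ[k] Q →ₗ[k] W) (t : P ⊗[k] Q) :
    TensorProduct.lift.equiv (RingHom.id k) P Q W f t = TensorProduct.lift f t := by
  induction t with
  | zero => simp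
  | tmul a b => simp
  | add x y hx hy => simp only [map_add, hx, hy]

/-- the map `f ↦ (lift f) ∘ Δ`. -/
def Lmap : (H →ₗ[k] H →ₗ[k] W) →ₗ[k] H →ₗ[k] W :=
  (LinearMap.lcomp k W (Coalgebra.comul (R := k))) ∘ₗ
    (TensorProduct.lift.equiv (RingHom.id k) H H W).toLinearMap

lemma Lmap_apply (f : H →ₗ[k] H →ₗ[k] W) (x : H) :
    Lmap f x = TensorProduct.lift f (Coalgebra.comul (R := k) x) := by
  simp [Lmap, equiv_lift, LinearMap.lcomp_apply, LinearMap.comp_apply, LinearEquiv.coe_coe]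

/-- `Θ α β δ = Σ_{(β)} Φ α β₁ β₂ δ`. -/
def Θmap (Φ : H →ₗ[k] H →ₗ[k] H →ₗ[k] H →ₗ[k] W) : H →ₗ[k] H →ₗ[k] H →ₗ[k] W :=
  (LinearMap.lflip (R₀ := k)).toLinearMap ∘ₗ (((LinearMap.lflip (R₀ := k)).toLinearMap ∘ₗ (Φ.compr₂ (LinearMap.lflip (R₀ := k)).toLinearMap)).compr₂ Lmap)

/-- `Ψ α β δ = Σ_{(δ)} Φ α β δ₁ δ₂`. -/
def Ψmap (Φ : H →ₗ[k] H →ₗ[k] H →ₗ[k] H →ₗ[k] W) : H →ₗ[k] H →ₗ[k] H →ₗ[k] W :=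
  Φ.compr₂ Lmap

lemma Θmap_apply (Φ : H →ₗ[k] H →ₗ[k] H →ₗ[k] H →ₗ[k] W) (α β δ : H) :
    Θmap Φ α β δ = ∑ q ∈ rep (Coalgebra.comul (R := k) β), Φ α q.1 q.2 δ := by
  have h1 : Θmap Φ α β δ
      = TensorProduct.lift (((LinearMap.lflip (R₀ := k)).toLinearMap ∘ₗ (Φ.compr₂ (LinearMap.lflip (R₀ := k)).toLinearMap)) α δ)
          (Coalgebra.comul (R := k) β) := by
    simp [Θmap, Lmap_apply, LinearMap.compr₂_apply, LinearMap.comp_apply,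
      LinearMap.lflip_apply]
  rw [h1, ← rep_lift (rep_spec (Coalgebra.comul (R := k) β)) _]
  exact Finset.sum_congr rfl fun q _ => by
    simp [LinearMap.comp_apply, LinearMap.lflip_apply, LinearMap.compr₂_apply]

lemma Ψmap_apply (Φ : H →ₗ[k] H →ₗ[k] H →ₗ[k] H →ₗ[k] W) (α β δ : H) :
    Ψmap Φ α β δ = ∑ q ∈ rep (Coalgebra.comul (R := k) δ), Φ α β q.1 q.2 := by
  have h1 : Ψmap Φ α β δ
      = TensorProduct.lift (Φ α β) (Coalgebra.comul (R := k) δ) := by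
    simp [Ψmap, Lmap_apply, LinearMap.compr₂_apply]
  rw [h1, ← rep_lift (rep_spec (Coalgebra.comul (R := k) δ)) _]

/-- Coassociativity with canonical representations. -/
lemma cancel3 (G : H →ₗ[k] H →ₗ[k] H →ₗ[k] W) (x : H) :
    ∑ i ∈ rep (Coalgebra.comul (R := k) x),
      ∑ j ∈ rep (Coalgebra.comul (R := k) i.1), G j.1 j.2 i.2
    = ∑ i ∈ rep (Coalgebra.comul (R := k) x),
        ∑ j ∈ rep (Coalgebra.comul (R := k) i.2), G i.1 j.1 j.2 :=
  coassoc_sum G (rep_spec _) (fun _ _ => rep_spec _) (fun _ _ => rep_spec _)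

/-- Coassociativity for four Sweedler legs with canonical representations. -/
lemma four_legs (Φ : H →ₗ[k] H →ₗ[k] H →ₗ[k] H →ₗ[k] W) (h : H) :
    ∑ i ∈ rep (Coalgebra.comul (R := k) h),
      ∑ j ∈ rep (Coalgebra.comul (R := k) i.1),
        ∑ q ∈ rep (Coalgebra.comul (R := k) j.2), Φ j.1 q.1 q.2 i.2
    = ∑ i ∈ rep (Coalgebra.comul (R := k) h),
        ∑ j ∈ rep (Coalgebra.comul (R := k) i.1),
          ∑ j' ∈ rep (Coalgebra.comul (R := k) i.2), Φ j.1 j.2 j'.1 j'.2 := by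
  calc
    ∑ i ∈ rep (Coalgebra.comul (R := k) h),
      ∑ j ∈ rep (Coalgebra.comul (R := k) i.1),
        ∑ q ∈ rep (Coalgebra.comul (R := k) j.2), Φ j.1 q.1 q.2 i.2
      = ∑ i ∈ rep (Coalgebra.comul (R := k) h),
          ∑ j ∈ rep (Coalgebra.comul (R := k) i.1), Θmap Φ j.1 j.2 i.2 :=
        Finset.sum_congr rfl fun i _ => Finset.sum_congr rfl fun j _ =>
          (Θmap_apply Φ j.1 j.2 i.2).symm
    _ = ∑ i ∈ rep (Coalgebra.comul (R := k) h),
          ∑ j' ∈ rep (Coalgebra.comul (R := k) i.2), Θmap Φ i.1 j'.1 j'.2 :=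
        cancel3 (Θmap Φ) h
    _ = ∑ i ∈ rep (Coalgebra.comul (R := k) h),
          ∑ j' ∈ rep (Coalgebra.comul (R := k) i.2),
            ∑ q ∈ rep (Coalgebra.comul (R := k) j'.1), Φ i.1 q.1 q.2 j'.2 :=
        Finset.sum_congr rfl fun i _ => Finset.sum_congr rfl fun j' _ =>
          Θmap_apply Φ i.1 j'.1 j'.2
    _ = ∑ i ∈ rep (Coalgebra.comul (R := k) h),
          ∑ j' ∈ rep (Coalgebra.comul (R := k) i.2),
            ∑ q ∈ rep (Coalgebra.comul (R := k) j'.2), Φ i.1 j'.1 q.1 q.2 :=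
        Finset.sum_congr rfl fun i _ =>
          coassoc_sum (Φ i.1) (rep_spec _) (fun _ _ => rep_spec _) (fun _ _ => rep_spec _)
    _ = ∑ i ∈ rep (Coalgebra.comul (R := k) h),
          ∑ j' ∈ rep (Coalgebra.comul (R := k) i.2), Ψmap Φ i.1 j'.1 j'.2 :=
        Finset.sum_congr rfl fun i _ => Finset.sum_congr rfl fun j' _ =>
          (Ψmap_apply Φ i.1 j'.1 j'.2).symm
    _ = ∑ i ∈ rep (Coalgebra.comul (R := k) h),
          ∑ j ∈ rep (Coalgebra.comul (R := k) i.1), Ψmap Φ j.1 j.2 i.2 :=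
        (cancel3 (Ψmap Φ) h).symm
    _ = ∑ i ∈ rep (Coalgebra.comul (R := k) h),
          ∑ j ∈ rep (Coalgebra.comul (R := k) i.1),
            ∑ j' ∈ rep (Coalgebra.comul (R := k) i.2), Φ j.1 j.2 j'.1 j'.2 :=
        Finset.sum_congr rfl fun i _ => Finset.sum_congr rfl fun j _ =>
          Ψmap_apply Φ j.1 j.2 i.2

end Helper

set_option maxHeartbeats 2000000 in
/-- Let `V` be a right `H`-comodule and `E := ((B#_σH) ⊗ V)^{coH}` the
associated bundle, with `B`-bimodule structure induced by multiplication in `B#_σH`.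
Then `∇_E : b ⊗ h ⊗ v ↦ d_B b ⊗ h ⊗ v` is a covariant derivative `E → Ω¹(B) ⊗_B E`, and
it is a bimodule covariant derivative with `σ_E(b ⊗ h ⊗ v ⊗_B β) = b(h₁·β) ⊗ h₂ ⊗ v`. -/
theorem associated_bundle_bimodule_covariant_derivative
    (T : TwistedSystem k B H)
    (M : Type) [AddCommGroup M] [Module k M]
    -- `(Ω¹(B), d_B)` a `σ`-twisted `H`-module FODC on `B`:
    (F : FODCData k B M) (hact : H →ₗ[k] M →ₗ[k] M)
    (h_comp : ∀ (ι : Type) (s : Finset ι) (f g : ι → H) (h : H),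
      Rep2 k (Coalgebra.comul (R := k)) s f g h → ∀ b b' : B,
        hact h (F.l b (F.d b')) = ∑ i ∈ s, F.l (T.act (f i) b) (hact (g i) (F.d b')))
    (h_lin : ∀ (h : H) (b : B), F.d (T.act h b) = hact h (F.d b))
    (h_dσ : ∀ h h' : H, F.d (T.coc h h') = 0)
    -- `V` a right `H`-comodule:
    (V : Type) [AddCommGroup V] [Module k V] (ρV : V →ₗ[k] V ⊗[k] H)
    -- the diagonal coaction on `(B ⊗ H) ⊗ V` defining the coinvariants `E`:
    (ρE : ((B ⊗[k] H) ⊗[k] V) →ₗ[k] ((B ⊗[k] H) ⊗[k] V) ⊗[k] H)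
    (hρE : ∀ (b : B) (h : H) (v : V) (ι ι' : Type) (s : Finset ι) (s' : Finset ι')
        (g₁ g₂ : ι → H) (v₀ : ι' → V) (v₁ : ι' → H),
      Rep2 k (Coalgebra.comul (R := k)) s g₁ g₂ h → Rep2 k ρV s' v₀ v₁ v →
        ρE ((b ⊗ₜ[k] h) ⊗ₜ[k] v) = ∑ i ∈ s, ∑ j ∈ s',
          ((b ⊗ₜ[k] g₁ i) ⊗ₜ[k] v₀ j) ⊗ₜ[k] (g₂ i * v₁ j))
    -- the `B`-bimodule structure of the associated bundle:
    (LB : B →ₗ[k] ((B ⊗[k] H) ⊗[k] V) →ₗ[k] ((B ⊗[k] H) ⊗[k] V))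
    (hLB : ∀ (b' b : B) (h : H) (v : V),
      LB b' ((b ⊗ₜ[k] h) ⊗ₜ[k] v) = ((b' * b) ⊗ₜ[k] h) ⊗ₜ[k] v)
    (RB : ((B ⊗[k] H) ⊗[k] V) →ₗ[k] B →ₗ[k] ((B ⊗[k] H) ⊗[k] V))
    (hRB : ∀ (b b' : B) (h : H) (v : V) (ι : Type) (s : Finset ι) (g₁ g₂ : ι → H),
      Rep2 k (Coalgebra.comul (R := k)) s g₁ g₂ h →
        RB ((b ⊗ₜ[k] h) ⊗ₜ[k] v) b'
          = ∑ i ∈ s, ((b * T.act (g₁ i) b') ⊗ₜ[k] g₂ i) ⊗ₜ[k] v)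
    -- the covariant derivative `∇_E` (before passing to `Ω¹(B) ⊗_B E`):
    (D₀ : ((B ⊗[k] H) ⊗[k] V) →ₗ[k] M ⊗[k] ((B ⊗[k] H) ⊗[k] V))
    (hD₀ : ∀ (b : B) (h : H) (v : V),
      D₀ ((b ⊗ₜ[k] h) ⊗ₜ[k] v) = (F.d b) ⊗ₜ[k] (((1 : B) ⊗ₜ[k] h) ⊗ₜ[k] v))
    -- the map `σ_E` (before passing to the quotient):
    (SE : ((B ⊗[k] H) ⊗[k] V) →ₗ[k] M →ₗ[k] M ⊗[k] ((B ⊗[k] H) ⊗[k] V))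
    (hSE : ∀ (b : B) (h : H) (v : V) (β : M) (ι : Type) (s : Finset ι) (g₁ g₂ : ι → H),
      Rep2 k (Coalgebra.comul (R := k)) s g₁ g₂ h →
        SE ((b ⊗ₜ[k] h) ⊗ₜ[k] v) β
          = ∑ i ∈ s, (F.l b (hact (g₁ i) β)) ⊗ₜ[k] (((1 : B) ⊗ₜ[k] g₂ i) ⊗ₜ[k] v)) :
    -- tensoring over `B`: quotient by the `B`-balancing relations
    let rel : Submodule k (M ⊗[k] ((B ⊗[k] H) ⊗[k] V)) :=
      Submodule.span k {y | ∃ (β : M) (b : B) (x : (B ⊗[k] H) ⊗[k] V),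
        y = (F.r β b) ⊗ₜ[k] x - β ⊗ₜ[k] (LB b x)}
    -- `∇_E` satisfies the left Leibniz rule in `Ω¹(B) ⊗_B E` …
    (∀ e : (B ⊗[k] H) ⊗[k] V, ρE e = e ⊗ₜ[k] (1 : H) → ∀ b : B,
      rel.mkQ (D₀ (LB b e))
        = rel.mkQ ((F.d b) ⊗ₜ[k] e + (TensorProduct.map (F.l b) LinearMap.id) (D₀ e))) ∧
    -- … `σ_E` is a `B`-bimodule map …
    (∀ (e : (B ⊗[k] H) ⊗[k] V) (β : M) (b : B), ρE e = e ⊗ₜ[k] (1 : H) →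
      rel.mkQ (SE (LB b e) β)
        = rel.mkQ ((TensorProduct.map (F.l b) LinearMap.id) (SE e β))) ∧
    (∀ (e : (B ⊗[k] H) ⊗[k] V) (β : M) (b' : B), ρE e = e ⊗ₜ[k] (1 : H) →
      rel.mkQ (SE e (F.r β b'))
        = rel.mkQ ((TensorProduct.map LinearMap.id (RB.flip b')) (SE e β))) ∧
    -- … and the twisted right Leibniz rule `∇_E(e·b') = σ_E(e ⊗ d_B b') + (∇_E e)·b'` holds:
    (∀ (e : (B ⊗[k] H) ⊗[k] V) (b' : B), ρE e = e ⊗ₜ[k] (1 : H) →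
      rel.mkQ (D₀ (RB e b'))
        = rel.mkQ (SE e (F.d b')
            + (TensorProduct.map LinearMap.id (RB.flip b')) (D₀ e))) := by
  intro rel
  classical
  have hmem : ∀ (β : M) (b : B) (x : (B ⊗[k] H) ⊗[k] V),
      (F.r β b) ⊗ₜ[k] x - β ⊗ₜ[k] (LB b x) ∈ rel :=
    fun β b x => Submodule.subset_span ⟨β, b, x, rfl⟩
  refine ⟨?_, ?_, ?_, ?_⟩
  · -- claim 1 : left Leibniz rule
    intro e he b
    clear he
    induction e using TensorProduct.induction_on with
    | zero => simp
    | tmul z v =>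
      induction z using TensorProduct.induction_on with
      | zero => simp [zero_tmul]
      | tmul b₀ h =>
        rw [hLB, hD₀, hD₀, Submodule.mkQ_apply, Submodule.mkQ_apply,
          Submodule.Quotient.eq]
        have hX : LB b₀ (((1:B) ⊗ₜ[k] h) ⊗ₜ[k] v) = (b₀ ⊗ₜ[k] h) ⊗ₜ[k] v := by
          rw [hLB, mul_one]
        have heq : F.d (b * b₀) ⊗ₜ[k] (((1:B) ⊗ₜ[k] h) ⊗ₜ[k] v)
            - (F.d b ⊗ₜ[k] ((b₀ ⊗ₜ[k] h) ⊗ₜ[k] v)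
              + (TensorProduct.map (F.l b) LinearMap.id)
                  (F.d b₀ ⊗ₜ[k] (((1:B) ⊗ₜ[k] h) ⊗ₜ[k] v)))
            = F.r (F.d b) b₀ ⊗ₜ[k] (((1:B) ⊗ₜ[k] h) ⊗ₜ[k] v)
              - F.d b ⊗ₜ[k] (LB b₀ (((1:B) ⊗ₜ[k] h) ⊗ₜ[k] v)) := by
          rw [hX, F.leibniz, map_tmul, add_tmul]
          simp only [LinearMap.id_coe, id_eq]
          abel
        rw [heq]
        exact hmem _ _ _
      | add x y hx hy =>
        simp only [add_tmul, map_add, tmul_add] at hx hy ⊢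
        rw [hx, hy]
        abel
    | add x y hx hy =>
      simp only [map_add, tmul_add] at hx hy ⊢
      rw [hx, hy]
      abel
  · -- claim 2 : σ_E is a left module map
    intro e β b he
    clear he
    induction e using TensorProduct.induction_on with
    | zero => simp
    | tmul z v =>
      induction z using TensorProduct.induction_on with
      | zero => simp [zero_tmul]
      | tmul b₀ h =>
        obtain ⟨s, hs⟩ := TensorProduct.exists_finset (Coalgebra.comul (R := k) h)
        have hrep : Rep2 k (Coalgebra.comul (R := k)) s Prod.fst Prod.snd h := hs.symm
        rw [hLB, hSE (b * b₀) h v β _ s _ _ hrep, hSE b₀ h v β _ s _ _ hrep,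
          map_sum, map_sum, map_sum]
        refine Finset.sum_congr rfl fun i _ => ?_
        simp only [map_tmul, LinearMap.id_coe, id_eq, F.mul_l]
      | add x y hx hy =>
        simp only [add_tmul, map_add, LinearMap.add_apply] at hx hy ⊢
        rw [hx, hy]
    | add x y hx hy =>
      simp only [map_add, LinearMap.add_apply] at hx hy ⊢
      rw [hx, hy]
  · -- claim 3 : σ_E is a right module map
    intro e β b' he
    clear he
    induction e using TensorProduct.induction_on with
    | zero => simp
    | tmul z v =>
      induction z using TensorProduct.induction_on with
      | zero => simp [zero_tmul]
      | tmul b h =>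
        have hswap : ∀ (m : M) (b₀ : B) (x : (B ⊗[k] H) ⊗[k] V),
            rel.mkQ ((F.r m b₀) ⊗ₜ[k] x) = rel.mkQ (m ⊗ₜ[k] (LB b₀ x)) := by
          intro m b₀ x
          rw [Submodule.mkQ_apply, Submodule.mkQ_apply, Submodule.Quotient.eq]
          exact hmem m b₀ x
        have rp : ∀ x : H, Rep2 k (Coalgebra.comul (R := k))
            (Helper.rep (Coalgebra.comul (R := k) (x))) Prod.fst Prod.snd x :=
          fun x => Helper.rep_spec _
        have main : ∀ βm, βm ∈ Submodule.span k {z : M | ∃ a b : B, z = F.l a (F.d b)} →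
            rel.mkQ (SE ((b ⊗ₜ[k] h) ⊗ₜ[k] v) (F.r βm b'))
              = rel.mkQ ((TensorProduct.map LinearMap.id (RB.flip b'))
                  (SE ((b ⊗ₜ[k] h) ⊗ₜ[k] v) βm)) := by
          intro βm hβm
          induction hβm using Submodule.span_induction with
          | mem z hz =>
            obtain ⟨a, c, rfl⟩ := hz
            -- the quadrilinear map Φ
            set Xlin : H →ₗ[k] (B ⊗[k] H) ⊗[k] V :=
              ((TensorProduct.mk k (B ⊗[k] H) V).flip v) ∘ₗ ((TensorProduct.mk k B H) 1)
              with hXlin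
            set TQ : M →ₗ[k] H →ₗ[k] M ⊗[k] ((B ⊗[k] H) ⊗[k] V) :=
              (LinearMap.lcomp k _ Xlin) ∘ₗ (TensorProduct.mk k M ((B ⊗[k] H) ⊗[k] V))
              with hTQ
            set B1 : H →ₗ[k] H →ₗ[k] M :=
              (F.l ∘ₗ (T.act.flip a)).compl₂ (hact.flip (F.d c)) with hB1
            set Φ₃ : H →ₗ[k] H →ₗ[k] H →ₗ[k] M :=
              (B1.compr₂ (F.l b)).compr₂ (F.r.compl₂ (T.act.flip b')) with hPhi3
            set Φ : H →ₗ[k] H →ₗ[k] H →ₗ[k] H →ₗ[k] M ⊗[k] ((B ⊗[k] H) ⊗[k] V) :=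
              Φ₃.compr₂ (LinearMap.llcomp k H M (H →ₗ[k] M ⊗[k] ((B ⊗[k] H) ⊗[k] V)) TQ)
              with hPhidef
            have hΦ : ∀ α γ δ ε : H, Φ α γ δ ε
                = F.r (F.l b (F.l (T.act α a) (hact γ (F.d c)))) (T.act δ b')
                    ⊗ₜ[k] (((1:B) ⊗ₜ[k] ε) ⊗ₜ[k] v) := by
              intro α γ δ ε
              simp [hPhidef, hPhi3, hB1, hTQ, hXlin, LinearMap.compr₂_apply,
                LinearMap.compl₂_apply, LinearMap.llcomp_apply, LinearMap.lcomp_apply,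
                LinearMap.comp_apply, LinearMap.flip_apply, TensorProduct.mk_apply]
            have hre : ∀ (x1 x2 : B) (m m2 : M) (yb : B),
                F.l b (F.l x1 (F.r m yb + F.l x2 m2))
                  = F.r (F.l b (F.l x1 m)) yb + F.l b (F.l (x1 * x2) m2) := by
              intro x1 x2 m m2 yb
              simp only [map_add, F.l_r, F.mul_l]
            set G1 : H →ₗ[k] H →ₗ[k] H →ₗ[k] M :=
              ((LinearMap.mul k B).compl₁₂ (T.act.flip a) (T.act.flip c)).compr₂
                ((LinearMap.lcomp k M (hact.flip (F.d b'))) ∘ₗ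
                  ((LinearMap.llcomp k M M M (F.l b)) ∘ₗ F.l)) with hG1
            have hG1v : ∀ α γ δ : H, G1 α γ δ
                = F.l b (F.l (T.act α a * T.act γ c) (hact δ (F.d b'))) := by
              intro α γ δ
              simp [hG1, LinearMap.compr₂_apply, LinearMap.compl₁₂_apply,
                LinearMap.lcomp_apply, LinearMap.llcomp_apply, LinearMap.comp_apply,
                LinearMap.flip_apply, LinearMap.mul_apply']
            have h1 : ∀ x : H, F.l b (hact x (F.l a (F.d (c * b'))))
                = ∑ j ∈ Helper.rep (Coalgebra.comul (R := k) (x)), ∑ q ∈ Helper.rep (Coalgebra.comul (R := k) (j.2)),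
                    (F.r (F.l b (F.l (T.act j.1 a) (hact q.1 (F.d c)))) (T.act q.2 b')
                      + F.l b (F.l (T.act j.1 a * T.act q.1 c) (hact q.2 (F.d b')))) := by
              intro x
              rw [h_comp _ (Helper.rep (Coalgebra.comul (R := k) (x))) Prod.fst Prod.snd x (rp x) a (c * b'), map_sum]
              refine Finset.sum_congr rfl fun j _ => ?_
              rw [← h_lin, T.act_mul _ (Helper.rep (Coalgebra.comul (R := k) (j.2))) Prod.fst Prod.snd j.2 (rp j.2) c b',
                map_sum, map_sum, map_sum]
              refine Finset.sum_congr rfl fun q _ => ?_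
              rw [F.leibniz, h_lin, h_lin]
              exact hre _ _ _ _ _
            have h2 : ∀ x : H, F.l b (hact x (F.l (a * c) (F.d b')))
                = ∑ j ∈ Helper.rep (Coalgebra.comul (R := k) (x)), ∑ q ∈ Helper.rep (Coalgebra.comul (R := k) (j.1)),
                    F.l b (F.l (T.act q.1 a * T.act q.2 c) (hact j.2 (F.d b'))) := by
              intro x
              rw [h_comp _ (Helper.rep (Coalgebra.comul (R := k) (x))) Prod.fst Prod.snd x (rp x) (a * c) b', map_sum]
              refine Finset.sum_congr rfl fun j _ => ?_
              rw [T.act_mul _ (Helper.rep (Coalgebra.comul (R := k) (j.1))) Prod.fst Prod.snd j.1 (rp j.1) a c, map_sum,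
                LinearMap.sum_apply, map_sum]
            have hc : ∀ x : H,
                (∑ j ∈ Helper.rep (Coalgebra.comul (R := k) (x)), ∑ q ∈ Helper.rep (Coalgebra.comul (R := k) (j.1)),
                  F.l b (F.l (T.act q.1 a * T.act q.2 c) (hact j.2 (F.d b'))))
                = ∑ j ∈ Helper.rep (Coalgebra.comul (R := k) (x)), ∑ q ∈ Helper.rep (Coalgebra.comul (R := k) (j.2)),
                    F.l b (F.l (T.act j.1 a * T.act q.1 c) (hact q.2 (F.d b'))) := by
              intro x
              have hcc := Helper.cancel3 G1 x
              simp only [hG1v] at hcc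
              exact hcc
            have hKey : ∀ x : H,
                F.l b (hact x (F.r (F.l a (F.d c)) b'))
                  = ∑ j ∈ Helper.rep (Coalgebra.comul (R := k) (x)), ∑ q ∈ Helper.rep (Coalgebra.comul (R := k) (j.2)),
                      F.r (F.l b (F.l (T.act j.1 a) (hact q.1 (F.d c)))) (T.act q.2 b') := by
              intro x
              have hβ : F.r (F.l a (F.d c)) b'
                  = F.l a (F.d (c * b')) - F.l (a * c) (F.d b') := by
                rw [F.l_r, F.leibniz, map_add, ← F.mul_l]
                abel
              rw [hβ, map_sub, map_sub, h1 x, h2 x, hc x, ← Finset.sum_sub_distrib]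
              refine Finset.sum_congr rfl fun j _ => ?_
              rw [← Finset.sum_sub_distrib]
              refine Finset.sum_congr rfl fun q _ => ?_
              abel
            have hLs : (∑ i ∈ Helper.rep (Coalgebra.comul (R := k) (h)),
                  F.l b (hact i.1 (F.r (F.l a (F.d c)) b'))
                    ⊗ₜ[k] (((1:B) ⊗ₜ[k] i.2) ⊗ₜ[k] v))
                = ∑ i ∈ Helper.rep (Coalgebra.comul (R := k) (h)), ∑ j ∈ Helper.rep (Coalgebra.comul (R := k) (i.1)), ∑ q ∈ Helper.rep (Coalgebra.comul (R := k) (j.2)),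
                    Φ j.1 q.1 q.2 i.2 := by
              refine Finset.sum_congr rfl fun i _ => ?_
              rw [hKey i.1, sum_tmul]
              refine Finset.sum_congr rfl fun j _ => ?_
              rw [sum_tmul]
              exact Finset.sum_congr rfl fun q _ => (hΦ j.1 q.1 q.2 i.2).symm
            have hRs : (TensorProduct.map LinearMap.id (RB.flip b'))
                  (∑ i ∈ Helper.rep (Coalgebra.comul (R := k) (h)),
                    F.l b (hact i.1 (F.l a (F.d c))) ⊗ₜ[k] (((1:B) ⊗ₜ[k] i.2) ⊗ₜ[k] v))
                = ∑ i ∈ Helper.rep (Coalgebra.comul (R := k) (h)), ∑ j' ∈ Helper.rep (Coalgebra.comul (R := k) (i.2)),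
                    F.l b (hact i.1 (F.l a (F.d c)))
                      ⊗ₜ[k] (LB (T.act j'.1 b') (((1:B) ⊗ₜ[k] j'.2) ⊗ₜ[k] v)) := by
              rw [map_sum]
              refine Finset.sum_congr rfl fun i _ => ?_
              rw [map_tmul]
              simp only [LinearMap.id_coe, id_eq, LinearMap.flip_apply]
              rw [hRB 1 b' i.2 v _ (Helper.rep (Coalgebra.comul (R := k) (i.2))) Prod.fst Prod.snd (rp i.2), tmul_sum]
              exact Finset.sum_congr rfl fun j' _ => by rw [hLB, one_mul, mul_one]
            have hin : ∀ (i j' : H × H),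
                (∑ j ∈ Helper.rep (Coalgebra.comul (R := k) (i.1)), Φ j.1 j.2 j'.1 j'.2)
                  = F.r (F.l b (hact i.1 (F.l a (F.d c)))) (T.act j'.1 b')
                      ⊗ₜ[k] (((1:B) ⊗ₜ[k] j'.2) ⊗ₜ[k] v) := by
              intro i j'
              have hmi : F.l b (hact i.1 (F.l a (F.d c)))
                  = ∑ j ∈ Helper.rep (Coalgebra.comul (R := k) (i.1)),
                      F.l b (F.l (T.act j.1 a) (hact j.2 (F.d c))) := by
                rw [h_comp _ (Helper.rep (Coalgebra.comul (R := k) (i.1))) Prod.fst Prod.snd i.1 (rp i.1) a c, map_sum]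
              rw [hmi, map_sum, LinearMap.sum_apply, sum_tmul]
              exact Finset.sum_congr rfl fun j _ => hΦ j.1 j.2 j'.1 j'.2
            rw [hSE b h v (F.r (F.l a (F.d c)) b') _ (Helper.rep (Coalgebra.comul (R := k) (h))) Prod.fst Prod.snd (rp h),
              hSE b h v (F.l a (F.d c)) _ (Helper.rep (Coalgebra.comul (R := k) (h))) Prod.fst Prod.snd (rp h),
              hLs, Helper.four_legs Φ h, hRs, map_sum, map_sum]
            refine Finset.sum_congr rfl fun i _ => ?_
            rw [Finset.sum_comm, map_sum, map_sum]
            refine Finset.sum_congr rfl fun j' _ => ?_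
            rw [hin i j']
            exact hswap _ _ _
          | zero => simp
          | add x y hx hy ihx ihy =>
            simp only [map_add, LinearMap.add_apply] at ihx ihy ⊢
            rw [ihx, ihy]
          | smul r x hx ihx =>
            simp only [map_smul, LinearMap.smul_apply] at ihx ⊢
            rw [ihx]
        exact main β (F.spanning β)
      | add x y hx hy =>
        simp only [add_tmul, map_add, LinearMap.add_apply] at hx hy ⊢
        rw [hx, hy]
    | add x y hx hy =>
      simp only [map_add, LinearMap.add_apply] at hx hy ⊢
      rw [hx, hy]
  · -- claim 4 : twisted right Leibniz rule
    intro e b' he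
    clear he
    induction e using TensorProduct.induction_on with
    | zero => simp
    | tmul z v =>
      induction z using TensorProduct.induction_on with
      | zero => simp [zero_tmul]
      | tmul b h =>
        obtain ⟨s, hs⟩ := TensorProduct.exists_finset (Coalgebra.comul (R := k) h)
        have hrep : Rep2 k (Coalgebra.comul (R := k)) s Prod.fst Prod.snd h := hs.symm
        rw [hRB b b' h v _ s _ _ hrep, hSE b h v (F.d b') _ s _ _ hrep, hD₀, map_sum]
        simp only [hD₀, map_tmul, LinearMap.id_coe, id_eq, LinearMap.flip_apply]
        rw [hRB 1 b' h v _ s _ _ hrep]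
        simp only [one_mul]
        rw [tmul_sum, map_sum, map_add, map_sum, map_sum, ← Finset.sum_add_distrib]
        refine Finset.sum_congr rfl fun i _ => ?_
        have hA : F.d (b * T.act i.1 b') ⊗ₜ[k] (((1:B) ⊗ₜ[k] i.2) ⊗ₜ[k] v)
            = F.l b (hact i.1 (F.d b')) ⊗ₜ[k] (((1:B) ⊗ₜ[k] i.2) ⊗ₜ[k] v)
              + F.r (F.d b) (T.act i.1 b') ⊗ₜ[k] (((1:B) ⊗ₜ[k] i.2) ⊗ₜ[k] v) := by
          rw [F.leibniz, h_lin, add_tmul]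
          abel
        rw [hA, map_add]
        congr 1
        have hLBX : LB (T.act i.1 b') (((1:B) ⊗ₜ[k] i.2) ⊗ₜ[k] v)
            = (T.act i.1 b' ⊗ₜ[k] i.2) ⊗ₜ[k] v := by rw [hLB, mul_one]
        rw [Submodule.mkQ_apply, Submodule.mkQ_apply, Submodule.Quotient.eq, ← hLBX]
        exact hmem _ _ _
      | add x y hx hy =>
        simp only [add_tmul, map_add, LinearMap.add_apply] at hx hy ⊢
        rw [hx, hy]
        abel
    | add x y hx hy =>
      simp only [map_add, LinearMap.add_apply] at hx hy ⊢
      rw [hx, hy]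
      abel


end
end
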